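/- arXiv:1310.5595 — 4 statements merged into one kernel-verified Lean document; each statement's English description precedes it below -/
import Mathlib

section
/- Let Z ⊕ X and Z ⊕ Y be unitarily equivalent, where X and Y are n-tuples and Z is an m-tuple (all over the same index set Λ). Then X and Y are unitarily equivalent. -/
noncomputable section

/-- A tuple of complex matrices over an index set `Λ`: a family of `n × n` complex
matrices indexed by `Λ`, where `n ≥ 1` is the *degree* of the tuple. -/
structure MatTup (Λ : Type*) where
  deg : ℕ
  deg_pos : 0 < deg
  mat : Λ → Matrix (Fin deg) (Fin deg) ℂ

namespace MatTup

variable {Λ : Type*}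

/-- The unitary action `U.X = (U Xₗ U⁻¹)ₗ`. -/
def act (X : MatTup Λ) (U : Matrix (Fin X.deg) (Fin X.deg) ℂ) : MatTup Λ :=
  ⟨X.deg, X.deg_pos, fun l => U * X.mat l * U⁻¹⟩

/-- Direct sum `X ⊕ Y`, the tuple of block-diagonal matrices. -/
def dsum (X Y : MatTup Λ) : MatTup Λ :=
  ⟨X.deg + Y.deg, Nat.add_pos_left X.deg_pos _, fun l =>
    Matrix.reindex finSumFinEquiv finSumFinEquiv (Matrix.fromBlocks (X.mat l) 0 0 (Y.mat l))⟩

/-- Unitary equivalence `X ≡ Y`: the degrees agree and some unitary `U` satisfies `U.X = Y`. -/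
def UEquiv (X Y : MatTup Λ) : Prop :=
  ∃ U ∈ Matrix.unitaryGroup (Fin X.deg) ℂ, X.act U = Y

/-- `X ≼ Y`: either `X ≡ Y`, or there are `A`, `B` with `X ≡ A` and `Y ≡ A ⊕ B`. -/
def Sub (X Y : MatTup Λ) : Prop :=
  X.UEquiv Y ∨ ∃ A B : MatTup Λ, X.UEquiv A ∧ Y.UEquiv (A.dsum B)

/-- Disjointness `X ⊥ Y`: no tuple `A` satisfies both `A ≼ X` and `A ≼ Y`. -/
def Disj (X Y : MatTup Λ) : Prop :=
  ¬∃ A : MatTup Λ, A.Sub X ∧ A.Sub Y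

/-- `X` is irreducible if no unitary `V` satisfies `V.X = A ⊕ B` for tuples `A`, `B`. -/
def Irred (X : MatTup Λ) : Prop :=
  ¬∃ (A B : MatTup Λ) (V : Matrix (Fin X.deg) (Fin X.deg) ℂ),
      V ∈ Matrix.unitaryGroup (Fin X.deg) ℂ ∧ X.act V = A.dsum B

/-- The stabilizer of `X`: all unitaries `U` with `U.X = X`. -/
def stab (X : MatTup Λ) : Set (Matrix (Fin X.deg) (Fin X.deg) ℂ) :=
  {U | U ∈ Matrix.unitaryGroup (Fin X.deg) ℂ ∧ X.act U = X}

/-- The direct sum `T 0 ⊕ T 1 ⊕ ⋯` of a nonempty finite family of tuples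
(associated to the left). -/
def bigDsum : {k : ℕ} → (Fin k → MatTup Λ) → 0 < k → MatTup Λ
  | 0, _, h => absurd h (lt_irrefl 0)
  | 1, T, _ => T 0
  | k + 2, T, _ =>
      (bigDsum (fun j : Fin (k + 1) => T j.castSucc) k.succ_pos).dsum (T (Fin.last (k + 1)))

end MatTup


open Matrix Polynomial in
lemma circle_infinite : {z : ℂ | ‖z‖ = 1}.Infinite := by
  have hIoo : (Set.Ioo (-1 : ℝ) 1).Infinite := Set.Ioo_infinite (by norm_num)
  apply Set.infinite_of_injOn_mapsTo (f := fun t : ℝ => (⟨t, Real.sqrt (1 - t ^ 2)⟩ : ℂ))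
    (s := Set.Ioo (-1 : ℝ) 1)
  · intro a _ b _ hab
    exact congrArg Complex.re hab
  · intro t ht
    obtain ⟨h1, h2⟩ := ht
    have h3 : (0 : ℝ) ≤ 1 - t ^ 2 := by nlinarith
    simp only [Set.mem_setOf_eq]
    rw [Complex.norm_def, Complex.normSq_mk]
    rw [Real.mul_self_sqrt h3]
    rw [show t * t + (1 - t ^ 2) = 1 by ring, Real.sqrt_one]
  · exact hIoo

open Matrix Polynomial in
lemma exists_circle_isUnit {k : ℕ} (A : Matrix (Fin k) (Fin k) ℂ) :
    ∃ ω : ℂ, ‖ω‖ = 1 ∧ IsUnit (1 - ω • A) := by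
  set q : Polynomial ℂ :=
    Matrix.det ((1 : Matrix (Fin k) (Fin k) ℂ[X]) - (X : ℂ[X]) • A.map C) with hq
  have heval : ∀ z : ℂ, eval z q = Matrix.det (1 - z • A) := by
    intro z
    rw [hq, ← Polynomial.coe_evalRingHom, RingHom.map_det]
    congr 1
    ext i j
    simp [Matrix.one_apply, apply_ite]; ring
  have hq0 : q ≠ 0 := by
    intro h
    have h2 := heval 0
    rw [h] at h2
    simp at h2
  have hroots : {z : ℂ | IsRoot q z}.Finite := Polynomial.finite_setOf_isRoot hq0
  obtain ⟨ω, hω⟩ := (circle_infinite.diff hroots).nonempty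
  refine ⟨ω, hω.1, ?_⟩
  rw [Matrix.isUnit_iff_isUnit_det, isUnit_iff_ne_zero]
  intro h0
  exact hω.2 (by simp only [Set.mem_setOf_eq, IsRoot, heval ω]; exact h0)


open Matrix in
lemma cancel_block_aux {m n : ℕ} {Λ : Type*}
    (Zm : Λ → Matrix (Fin m) (Fin m) ℂ) (Xm Ym : Λ → Matrix (Fin n) (Fin n) ℂ)
    (V : Matrix (Fin m ⊕ Fin n) (Fin m ⊕ Fin n) ℂ)
    (hV1 : Vᴴ * V = 1)
    (hint : ∀ l, V * Matrix.fromBlocks (Zm l) 0 0 (Xm l)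
      = Matrix.fromBlocks (Zm l) 0 0 (Ym l) * V)
    (hA : IsUnit (1 - V.toBlocks₁₁)) :
    ∃ W : Matrix (Fin n) (Fin n) ℂ, Wᴴ * W = 1 ∧ ∀ l, W * Xm l = Ym l * W := by
  obtain ⟨A, B, C, D, hVb⟩ : ∃ A B C D, V = Matrix.fromBlocks A B C D :=
    ⟨_, _, _, _, (Matrix.fromBlocks_toBlocks V).symm⟩
  rw [hVb, Matrix.toBlocks_fromBlocks₁₁] at hA
  have hrel : ∀ l, A * Zm l = Zm l * A ∧ B * Xm l = Zm l * B ∧ C * Zm l = Ym l * C ∧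
      D * Xm l = Ym l * D := by
    intro l
    have h := hint l
    rw [hVb, Matrix.fromBlocks_multiply, Matrix.fromBlocks_multiply] at h
    simpa using Matrix.fromBlocks_inj.mp h
  rw [hVb, Matrix.fromBlocks_conjTranspose, Matrix.fromBlocks_multiply,
    ← Matrix.fromBlocks_one] at hV1
  obtain ⟨h1, h2, h3, h4⟩ := Matrix.fromBlocks_inj.mp hV1
  have hCD : Cᴴ * D = -(Aᴴ * B) := eq_neg_of_add_eq_zero_right h2
  have hDC : Dᴴ * C = -(Bᴴ * A) := eq_neg_of_add_eq_zero_right h3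
  have hCC : Cᴴ * C = 1 - Aᴴ * A := eq_sub_of_add_eq' h1
  have hDD : Dᴴ * D = 1 - Bᴴ * B := eq_sub_of_add_eq' h4
  set F := (1 - A)⁻¹ with hF
  have hdet := (Matrix.isUnit_iff_isUnit_det _).mp hA
  have hEF : (1 - A) * F = 1 := Matrix.mul_nonsing_inv _ hdet
  have hFE : F * (1 - A) = 1 := Matrix.nonsing_inv_mul _ hdet
  have hEH : (1 - A)ᴴ = 1 - Aᴴ := by
    rw [Matrix.conjTranspose_sub, Matrix.conjTranspose_one]
  have hEFH : (1 - Aᴴ) * Fᴴ = 1 := by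
    have h5 := congrArg Matrix.conjTranspose hFE
    rwa [Matrix.conjTranspose_mul, hEH, Matrix.conjTranspose_one] at h5
  have hFEH : Fᴴ * (1 - Aᴴ) = 1 := by
    have h5 := congrArg Matrix.conjTranspose hEF
    rwa [Matrix.conjTranspose_mul, hEH, Matrix.conjTranspose_one] at h5
  have hK : 1 + A * F + Fᴴ * Aᴴ - Fᴴ * (1 - Aᴴ * A) * F = (0 : Matrix (Fin m) (Fin m) ℂ) := by
    have e1 : (1 - Aᴴ) * (1 + A * F + Fᴴ * Aᴴ - Fᴴ * (1 - Aᴴ * A) * F) * (1 - A)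
        = (1 - Aᴴ) * (1 - A) + (1 - Aᴴ) * A * (F * (1 - A))
          + ((1 - Aᴴ) * Fᴴ) * (Aᴴ * (1 - A))
          - ((1 - Aᴴ) * Fᴴ) * ((1 - Aᴴ * A) * (F * (1 - A))) := by noncomm_ring
    rw [hFE, hEFH] at e1
    have e2 : (1 - Aᴴ) * (1 + A * F + Fᴴ * Aᴴ - Fᴴ * (1 - Aᴴ * A) * F) * (1 - A) = 0 := by
      rw [e1]; noncomm_ring
    have e3 : 1 + A * F + Fᴴ * Aᴴ - Fᴴ * (1 - Aᴴ * A) * F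
        = Fᴴ * ((1 - Aᴴ) * (1 + A * F + Fᴴ * Aᴴ - Fᴴ * (1 - Aᴴ * A) * F) * (1 - A)) * F := by
      calc 1 + A * F + Fᴴ * Aᴴ - Fᴴ * (1 - Aᴴ * A) * F
          = (Fᴴ * (1 - Aᴴ)) * (1 + A * F + Fᴴ * Aᴴ - Fᴴ * (1 - Aᴴ * A) * F) * ((1 - A) * F) := by
            rw [hFEH, hEF, one_mul, mul_one]
        _ = _ := by noncomm_ring
    rw [e3, e2, Matrix.mul_zero, Matrix.zero_mul]
  refine ⟨D + C * F * B, ?_, ?_⟩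
  · have expand : (D + C * F * B)ᴴ * (D + C * F * B)
        = Dᴴ * D + (Dᴴ * C) * (F * B) + Bᴴ * Fᴴ * (Cᴴ * D) + Bᴴ * (Fᴴ * (Cᴴ * C) * F) * B := by
      simp only [Matrix.conjTranspose_add, Matrix.conjTranspose_mul]
      simp only [Matrix.mul_add, Matrix.add_mul, Matrix.mul_sub, Matrix.sub_mul, Matrix.mul_assoc, Matrix.mul_one, Matrix.one_mul, Matrix.mul_neg, Matrix.neg_mul, Matrix.mul_zero, Matrix.zero_mul]; try abel
    rw [hDD, hDC, hCD, hCC] at expand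
    rw [expand]
    have e4 : 1 - Bᴴ * B + -(Bᴴ * A) * (F * B) + Bᴴ * Fᴴ * -(Aᴴ * B)
          + Bᴴ * (Fᴴ * (1 - Aᴴ * A) * F) * B
        = 1 - Bᴴ * (1 + A * F + Fᴴ * Aᴴ - Fᴴ * (1 - Aᴴ * A) * F) * B := by
          simp only [Matrix.mul_add, Matrix.add_mul, Matrix.mul_sub, Matrix.sub_mul, Matrix.mul_assoc, Matrix.mul_one, Matrix.one_mul, Matrix.mul_neg, Matrix.neg_mul, Matrix.mul_zero, Matrix.zero_mul]; try abel
    rw [e4, hK, Matrix.mul_zero, Matrix.zero_mul, sub_zero]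
  · intro l
    obtain ⟨hAZ, hBX, hCZ, hDX⟩ := hrel l
    have hEZ : (1 - A) * Zm l = Zm l * (1 - A) := by
      rw [sub_mul, mul_sub, one_mul, mul_one, hAZ]
    have hFZ : F * Zm l = Zm l * F := by
      calc F * Zm l = (F * Zm l) * ((1 - A) * F) := by rw [hEF, mul_one]
        _ = F * (Zm l * (1 - A)) * F := by noncomm_ring
        _ = F * ((1 - A) * Zm l) * F := by rw [hEZ]
        _ = (F * (1 - A)) * (Zm l * F) := by noncomm_ring
        _ = Zm l * F := by rw [hFE, one_mul]
    calc (D + C * F * B) * Xm l = D * Xm l + C * (F * (B * Xm l)) := by simp only [Matrix.mul_add, Matrix.add_mul, Matrix.mul_sub, Matrix.sub_mul, Matrix.mul_assoc, Matrix.mul_one, Matrix.one_mul, Matrix.mul_neg, Matrix.neg_mul, Matrix.mul_zero, Matrix.zero_mul]; try abel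
      _ = Ym l * D + C * (F * (Zm l * B)) := by rw [hDX, hBX]
      _ = Ym l * D + C * ((F * Zm l) * B) := by simp only [Matrix.mul_add, Matrix.add_mul, Matrix.mul_sub, Matrix.sub_mul, Matrix.mul_assoc, Matrix.mul_one, Matrix.one_mul, Matrix.mul_neg, Matrix.neg_mul, Matrix.mul_zero, Matrix.zero_mul]; try abel
      _ = Ym l * D + C * ((Zm l * F) * B) := by rw [hFZ]
      _ = Ym l * D + (C * Zm l) * (F * B) := by simp only [Matrix.mul_add, Matrix.add_mul, Matrix.mul_sub, Matrix.sub_mul, Matrix.mul_assoc, Matrix.mul_one, Matrix.one_mul, Matrix.mul_neg, Matrix.neg_mul, Matrix.mul_zero, Matrix.zero_mul]; try abel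
      _ = Ym l * D + (Ym l * C) * (F * B) := by rw [hCZ]
      _ = Ym l * (D + C * F * B) := by simp only [Matrix.mul_add, Matrix.add_mul, Matrix.mul_sub, Matrix.sub_mul, Matrix.mul_assoc, Matrix.mul_one, Matrix.one_mul, Matrix.mul_neg, Matrix.neg_mul, Matrix.mul_zero, Matrix.zero_mul]; try abel


open Matrix in
lemma cancel_block {m n : ℕ} {Λ : Type*}
    (Zm : Λ → Matrix (Fin m) (Fin m) ℂ) (Xm Ym : Λ → Matrix (Fin n) (Fin n) ℂ)
    (V : Matrix (Fin m ⊕ Fin n) (Fin m ⊕ Fin n) ℂ)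
    (hV1 : Vᴴ * V = 1)
    (hint : ∀ l, V * Matrix.fromBlocks (Zm l) 0 0 (Xm l)
      = Matrix.fromBlocks (Zm l) 0 0 (Ym l) * V)
    :
    ∃ W : Matrix (Fin n) (Fin n) ℂ, Wᴴ * W = 1 ∧ ∀ l, W * Xm l = Ym l * W := by
  obtain ⟨ω, hω, hunit⟩ := exists_circle_isUnit V.toBlocks₁₁
  have hωc : (starRingEnd ℂ) ω * ω = 1 := by
    rw [mul_comm, Complex.mul_conj, Complex.normSq_eq_norm_sq, hω]
    norm_num
  apply cancel_block_aux Zm Xm Ym (ω • V)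
  · rw [Matrix.conjTranspose_smul, Matrix.smul_mul, Matrix.mul_smul, hV1, smul_smul, Complex.star_def, hωc, one_smul]
  · intro l
    rw [Matrix.smul_mul, Matrix.mul_smul, hint l]
  · have hb : (ω • V).toBlocks₁₁ = ω • V.toBlocks₁₁ := rfl
    rw [hb]
    exact hunit

/-- If `Z ⊕ X` and `Z ⊕ Y` are unitarily equivalent, where `X` and `Y`
are `n`-tuples and `Z` is an `m`-tuple, then `X` and `Y` are unitarily equivalent. -/
theorem stmt_0 {Λ : Type*} [Nonempty Λ] {n m : ℕ} (X Y Z : MatTup Λ)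
    (hX : X.deg = n) (hY : Y.deg = n) (hZ : Z.deg = m)
    (h : (Z.dsum X).UEquiv (Z.dsum Y)) : X.UEquiv Y := by
  obtain ⟨dX, pX, Xm⟩ := X
  obtain ⟨dY, pY, Ym⟩ := Y
  obtain ⟨dZ, pZ, Zm⟩ := Z
  replace hX : dX = n := hX
  replace hY : dY = n := hY
  replace hZ : dZ = m := hZ
  subst hX hZ hY
  obtain ⟨U, hU, hact⟩ := h
  dsimp only [MatTup.dsum] at U hU
  simp only [MatTup.act, MatTup.dsum, MatTup.mk.injEq, heq_eq_eq, true_and] at hact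
  have hsU : star U * U = 1 := Matrix.mem_unitaryGroup_iff'.mp hU
  have hUinv : U⁻¹ = star U := Matrix.inv_eq_left_inv hsU
  set e : Fin dZ ⊕ Fin dY ≃ Fin (dZ + dY) := finSumFinEquiv with he
  set ψ := (Matrix.reindexAlgEquiv ℂ ℂ e).symm with hψdef
  have hψ : ∀ M : Matrix (Fin dZ ⊕ Fin dY) (Fin dZ ⊕ Fin dY) ℂ, ψ (Matrix.reindex e e M) = M := by
    intro M
    rw [← Matrix.reindexAlgEquiv_apply ℂ ℂ e M, hψdef, AlgEquiv.symm_apply_apply]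
  set V := ψ U with hVdef
  have hint : ∀ l, V * Matrix.fromBlocks (Zm l) 0 0 (Xm l)
      = Matrix.fromBlocks (Zm l) 0 0 (Ym l) * V := by
    intro l
    have h1 : U * (Matrix.reindex e e (Matrix.fromBlocks (Zm l) 0 0 (Xm l))) * U⁻¹
        = Matrix.reindex e e (Matrix.fromBlocks (Zm l) 0 0 (Ym l)) :=
      congrFun (eq_of_heq (MatTup.mk.inj hact).2) l
    rw [hUinv] at h1
    have h2 : U * (Matrix.reindex e e (Matrix.fromBlocks (Zm l) 0 0 (Xm l)))
        = (Matrix.reindex e e (Matrix.fromBlocks (Zm l) 0 0 (Ym l))) * U := by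
      calc U * (Matrix.reindex e e (Matrix.fromBlocks (Zm l) 0 0 (Xm l)))
          = U * (Matrix.reindex e e (Matrix.fromBlocks (Zm l) 0 0 (Xm l))) * (star U * U) := by
            rw [hsU, mul_one]
        _ = (U * (Matrix.reindex e e (Matrix.fromBlocks (Zm l) 0 0 (Xm l))) * star U) * U := by
            simp only [Matrix.mul_assoc]
        _ = (Matrix.reindex e e (Matrix.fromBlocks (Zm l) 0 0 (Ym l))) * U := by rw [h1]
    have h3 := congrArg ψ h2
    rw [map_mul, map_mul, hψ, hψ] at h3
    exact h3
  have hV1 : V.conjTranspose * V = 1 := by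
    have hsV : V.conjTranspose = ψ (star U) := by
      rw [hVdef, hψdef, Matrix.reindexAlgEquiv_symm, Matrix.reindexAlgEquiv_apply,
        Matrix.reindexAlgEquiv_apply, Matrix.star_eq_conjTranspose, Matrix.conjTranspose_reindex]
    rw [hsV, hVdef, ← map_mul, hsU, map_one]
  obtain ⟨W, hW1, hWint⟩ := cancel_block Zm Xm Ym V hV1 hint
  refine ⟨W, Matrix.mem_unitaryGroup_iff'.mpr
    (by rw [Matrix.star_eq_conjTranspose]; exact hW1), ?_⟩
  have hWinv : W⁻¹ = W.conjTranspose := Matrix.inv_eq_left_inv hW1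
  have h2 : W * W.conjTranspose = 1 := mul_eq_one_comm.mp hW1
  simp only [MatTup.act, MatTup.mk.injEq, heq_eq_eq, true_and]
  funext l
  rw [hWinv]
  calc W * Xm l * W.conjTranspose = Ym l * W * W.conjTranspose := by rw [hWint l]
    _ = Ym l := by rw [Matrix.mul_assoc, h2, mul_one]
end
end

section
/- Let X, Y, Z be tuples of complex matrices over the same index set Λ. If Z ⊥ X and Z ⊥ Y, then Z ⊥ (X ⊕ Y). -/
noncomputable section

namespace MatTupAux
open Matrix
variable {Λ : Type*}

/-- Equality of `MatTup`s from degree equality and entrywise matrix equality. -/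
lemma matTup_ext {X Y : MatTup Λ} (h : X.deg = Y.deg)
    (hm : ∀ l, X.mat l = (Y.mat l).submatrix (Fin.cast h) (Fin.cast h)) : X = Y := by
  obtain ⟨n, hn, f⟩ := X; obtain ⟨m, hm', g⟩ := Y
  dsimp at h; subst h
  simp only [MatTup.mk.injEq, heq_eq_eq, true_and]
  funext l; have := hm l; simp only [] at this; rw [this]; ext i j
  simp [Matrix.submatrix_apply]

/-- `T` is a *-intertwiner from `A` to `X`. -/
def IsHom {a x : ℕ} (A : Λ → Matrix (Fin a) (Fin a) ℂ) (Xm : Λ → Matrix (Fin x) (Fin x) ℂ)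
    (T : Matrix (Fin x) (Fin a) ℂ) : Prop :=
  ∀ l, T * A l = Xm l * T ∧ T * (A l)ᴴ = (Xm l)ᴴ * T

lemma IsHom.comp {a b c : ℕ} {A : Λ → Matrix (Fin a) (Fin a) ℂ}
    {B : Λ → Matrix (Fin b) (Fin b) ℂ} {C : Λ → Matrix (Fin c) (Fin c) ℂ}
    {S : Matrix (Fin b) (Fin a) ℂ} {T : Matrix (Fin c) (Fin b) ℂ}
    (hS : IsHom A B S) (hT : IsHom B C T) : IsHom A C (T * S) := by
  intro l
  constructor
  · rw [Matrix.mul_assoc, (hS l).1, ← Matrix.mul_assoc, (hT l).1, Matrix.mul_assoc]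
  · rw [Matrix.mul_assoc, (hS l).2, ← Matrix.mul_assoc, (hT l).2, Matrix.mul_assoc]

/-- The inclusion matrix of the first block. -/
def incl (a b : ℕ) : Matrix (Fin (a + b)) (Fin a) ℂ :=
  fun i p => if i = Fin.castAdd b p then 1 else 0

lemma incl_isometry (a b : ℕ) : (incl a b)ᴴ * incl a b = 1 := by
  ext p q
  simp only [Matrix.mul_apply, Matrix.conjTranspose_apply, incl, apply_ite (star : ℂ → ℂ),
    star_one, star_zero, ite_mul, one_mul, zero_mul, mul_ite, mul_one, mul_zero]
  rw [Finset.sum_ite_eq']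
  simp [Matrix.one_apply, Fin.castAdd_inj, eq_comm]

lemma block_mul_incl {a b : ℕ} (P : Matrix (Fin a) (Fin a) ℂ) (Q : Matrix (Fin b) (Fin b) ℂ) :
    (Matrix.reindex finSumFinEquiv finSumFinEquiv (Matrix.fromBlocks P 0 0 Q)) * incl a b
      = incl a b * P := by
  ext i p
  have key : ∀ i, ((Matrix.reindex finSumFinEquiv finSumFinEquiv
      (Matrix.fromBlocks P 0 0 Q)) * incl a b) i p
      = Matrix.fromBlocks P (0 : Matrix _ (Fin b) ℂ) (0 : Matrix (Fin b) _ ℂ) Q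
          (finSumFinEquiv.symm i) (Sum.inl p) := by
    intro i
    simp only [Matrix.mul_apply, incl, mul_ite, mul_one, mul_zero]
    rw [Finset.sum_ite_eq']
    simp [Matrix.reindex_apply, finSumFinEquiv_symm_apply_castAdd]
  rw [key]
  rcases hsi : finSumFinEquiv.symm i with q | r
  · have hi : i = finSumFinEquiv (Sum.inl q) := by rw [← hsi]; simp
    subst hi
    simp only [Matrix.mul_apply, incl, ite_mul, one_mul, zero_mul]
    rw [Finset.sum_eq_single q]
    · simp [Matrix.fromBlocks_apply₁₁]
    · intro c _ hc
      simp only [finSumFinEquiv_apply_left, ite_eq_right_iff]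
      refine if_neg (fun hcc => ?_)
      exact absurd ((Fin.castAdd_inj).mp hcc) (fun h => hc h.symm)
    · simp
  · have hi : i = finSumFinEquiv (Sum.inr r) := by rw [← hsi]; simp
    subst hi
    simp only [Matrix.mul_apply, incl, ite_mul, one_mul, zero_mul]
    rw [Finset.sum_eq_zero]
    · simp [Matrix.fromBlocks_apply₂₁]
    · intro c _
      simp only [finSumFinEquiv_apply_right, ite_eq_right_iff]
      refine if_neg (fun hcc => ?_)
      exfalso
      have := congrArg Fin.val hcc
      simp [Fin.natAdd, Fin.castAdd, Fin.castLE] at this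
      omega

lemma block_conjTranspose {a b : ℕ} (P : Matrix (Fin a) (Fin a) ℂ)
    (Q : Matrix (Fin b) (Fin b) ℂ) :
    (Matrix.reindex finSumFinEquiv finSumFinEquiv (Matrix.fromBlocks P 0 0 Q))ᴴ
      = Matrix.reindex finSumFinEquiv finSumFinEquiv (Matrix.fromBlocks Pᴴ 0 0 Qᴴ) := by
  rw [Matrix.conjTranspose_reindex, Matrix.fromBlocks_conjTranspose]
  simp

lemma unitary_facts {n : ℕ} {U : Matrix (Fin n) (Fin n) ℂ}
    (hU : U ∈ Matrix.unitaryGroup (Fin n) ℂ) :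
    Uᴴ * U = 1 ∧ U * Uᴴ = 1 ∧ U⁻¹ = Uᴴ := by
  have h1 : Uᴴ * U = 1 := by
    rw [← Matrix.star_eq_conjTranspose]; exact Matrix.mem_unitaryGroup_iff'.mp hU
  have h2 : U * Uᴴ = 1 := by
    rw [← Matrix.star_eq_conjTranspose]; exact Matrix.mem_unitaryGroup_iff.mp hU
  exact ⟨h1, h2, Matrix.inv_eq_left_inv h1⟩

/-- From `A ≼ X`, extract an isometric *-intertwiner. -/
lemma hom_of_sub {A X : MatTup Λ} (h : A.Sub X) :
    ∃ V : Matrix (Fin X.deg) (Fin A.deg) ℂ, Vᴴ * V = 1 ∧ IsHom A.mat X.mat V := by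
  obtain ⟨a, apos, Am⟩ := A
  obtain ⟨x, xpos, Xm⟩ := X
  rcases h with ⟨U, hU, hact⟩ | ⟨A₁, B, ⟨U₁, hU₁, ha1⟩, ⟨U₂, hU₂, ha2⟩⟩
  · -- direct unitary equivalence
    dsimp [MatTup.act] at hact hU
    injection hact with hd hm
    subst hd
    have hm' := eq_of_heq hm
    obtain ⟨h1, h2, h3⟩ := unitary_facts hU
    refine ⟨U, h1, fun l => ?_⟩
    have hX : Xm l = U * Am l * Uᴴ := by
      rw [← congrFun hm' l, h3]
    have hXs : (Xm l)ᴴ = U * (Am l)ᴴ * Uᴴ := by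
      rw [hX, Matrix.conjTranspose_mul, Matrix.conjTranspose_mul,
        Matrix.conjTranspose_conjTranspose, Matrix.mul_assoc]
    constructor
    · show U * Am l = Xm l * U
      rw [hX, Matrix.mul_assoc, Matrix.mul_assoc, h1, Matrix.mul_one]
    · show U * (Am l)ᴴ = (Xm l)ᴴ * U
      rw [hXs, Matrix.mul_assoc, Matrix.mul_assoc, h1, Matrix.mul_one]
  · -- via a direct sum
    obtain ⟨c, cpos, Cm⟩ := A₁
    obtain ⟨bd, bpos, Bm⟩ := B
    dsimp [MatTup.act, MatTup.dsum] at ha1 ha2 hU₁ hU₂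
    injection ha1 with hd1 hm1
    subst hd1
    have hm1' := eq_of_heq hm1
    injection ha2 with hd2 hm2
    subst hd2
    have hm2' := eq_of_heq hm2
    obtain ⟨hA1, hA2, hA3⟩ := unitary_facts hU₁
    obtain ⟨hB1, hB2, hB3⟩ := unitary_facts hU₂
    refine ⟨U₂ᴴ * incl a bd * U₁, ?_, fun l => ?_⟩
    · have e1 : (U₂ᴴ * incl a bd * U₁)ᴴ * (U₂ᴴ * incl a bd * U₁)
          = U₁ᴴ * ((incl a bd)ᴴ * (U₂ * (U₂ᴴ * (incl a bd * U₁)))) := by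
        simp only [Matrix.conjTranspose_mul, Matrix.conjTranspose_conjTranspose,
          Matrix.mul_assoc]
      rw [e1, ← Matrix.mul_assoc U₂ U₂ᴴ, hB2, Matrix.one_mul,
        ← Matrix.mul_assoc ((incl a bd)ᴴ) (incl a bd) U₁, incl_isometry, Matrix.one_mul, hA1]
    · set R : Λ → Matrix (Fin (a + bd)) (Fin (a + bd)) ℂ :=
        fun l => Matrix.reindex finSumFinEquiv finSumFinEquiv
          (Matrix.fromBlocks (Cm l) 0 0 (Bm l)) with hR
      have hXm : ∀ l, Xm l = U₂ᴴ * R l * U₂ := by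
        intro l
        have h0 := congrFun hm2' l
        have h0' : U₂ * Xm l * U₂ᴴ = R l := by
          rw [← hB3]
          exact h0
        rw [← h0']
        calc Xm l = (U₂ᴴ * U₂) * Xm l * (U₂ᴴ * U₂) := by
              rw [hB1, Matrix.one_mul, Matrix.mul_one]
          _ = U₂ᴴ * (U₂ * Xm l * U₂ᴴ) * U₂ := by simp only [Matrix.mul_assoc]
      have hCm : ∀ l, Cm l = U₁ * Am l * U₁ᴴ := by
        intro l; rw [← congrFun hm1' l, hA3]
      have hU1A : ∀ l, U₁ * Am l = Cm l * U₁ := by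
        intro l
        rw [hCm, Matrix.mul_assoc, Matrix.mul_assoc, hA1, Matrix.mul_one]
      have hU1As : ∀ l, U₁ * (Am l)ᴴ = (Cm l)ᴴ * U₁ := by
        intro l
        have e2 : (U₁ * Am l * U₁ᴴ)ᴴ * U₁ = U₁ * ((Am l)ᴴ * (U₁ᴴ * U₁)) := by
          simp only [Matrix.conjTranspose_mul, Matrix.conjTranspose_conjTranspose,
            Matrix.mul_assoc]
        rw [hCm, e2, hA1, Matrix.mul_one]
      have hXU : ∀ l, Xm l * U₂ᴴ = U₂ᴴ * R l := by
        intro l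
        rw [hXm, Matrix.mul_assoc, Matrix.mul_assoc, hB2, Matrix.mul_one]
      have hXUs : ∀ l, (Xm l)ᴴ * U₂ᴴ = U₂ᴴ * (R l)ᴴ := by
        intro l
        have e3 : (U₂ᴴ * R l * U₂)ᴴ * U₂ᴴ = U₂ᴴ * ((R l)ᴴ * (U₂ * U₂ᴴ)) := by
          simp only [Matrix.conjTranspose_mul, Matrix.conjTranspose_conjTranspose,
            Matrix.mul_assoc]
        rw [hXm, e3, hB2, Matrix.mul_one]
      have hRE : ∀ l, R l * incl a bd = incl a bd * Cm l := fun l => block_mul_incl _ _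
      have hREs : ∀ l, (R l)ᴴ * incl a bd = incl a bd * (Cm l)ᴴ := by
        intro l
        rw [hR]
        rw [block_conjTranspose]
        exact block_mul_incl _ _
      constructor
      · show U₂ᴴ * incl a bd * U₁ * Am l = Xm l * (U₂ᴴ * incl a bd * U₁)
        calc U₂ᴴ * incl a bd * U₁ * Am l
            = U₂ᴴ * incl a bd * (Cm l * U₁) := by
              rw [Matrix.mul_assoc, hU1A, ← Matrix.mul_assoc, Matrix.mul_assoc]
        _ = U₂ᴴ * (incl a bd * Cm l) * U₁ := by simp only [Matrix.mul_assoc]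
        _ = U₂ᴴ * (R l * incl a bd) * U₁ := by rw [hRE]
        _ = (Xm l * U₂ᴴ) * incl a bd * U₁ := by rw [hXU]; simp only [Matrix.mul_assoc]
        _ = Xm l * (U₂ᴴ * incl a bd * U₁) := by simp only [Matrix.mul_assoc]
      · show U₂ᴴ * incl a bd * U₁ * (Am l)ᴴ = (Xm l)ᴴ * (U₂ᴴ * incl a bd * U₁)
        calc U₂ᴴ * incl a bd * U₁ * (Am l)ᴴ
            = U₂ᴴ * incl a bd * ((Cm l)ᴴ * U₁) := by
              rw [Matrix.mul_assoc, hU1As, ← Matrix.mul_assoc, Matrix.mul_assoc]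
        _ = U₂ᴴ * (incl a bd * (Cm l)ᴴ) * U₁ := by simp only [Matrix.mul_assoc]
        _ = U₂ᴴ * ((R l)ᴴ * incl a bd) * U₁ := by rw [hREs]
        _ = ((Xm l)ᴴ * U₂ᴴ) * incl a bd * U₁ := by rw [hXUs]; simp only [Matrix.mul_assoc]
        _ = (Xm l)ᴴ * (U₂ᴴ * incl a bd * U₁) := by simp only [Matrix.mul_assoc]

lemma extend_isometry {a x : ℕ} (hax : a < x) (V : Matrix (Fin x) (Fin a) ℂ)
    (hV : Vᴴ * V = 1) :
    ∃ U : Matrix (Fin x) (Fin x) ℂ, Uᴴ * U = 1 ∧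
      ∀ (p : Fin a) (i : Fin x), U i (Fin.castLE hax.le p) = V i p := by
  classical
  set col : Fin a → EuclideanSpace ℂ (Fin x) :=
    fun j => (WithLp.equiv 2 _).symm (fun i => V i j) with hcol
  set s : Set (Fin x) := {i | (i : ℕ) < a} with hs
  set v : Fin x → EuclideanSpace ℂ (Fin x) :=
    fun i => if h : (i : ℕ) < a then col ⟨i, h⟩ else 0 with hv
  have horth : Orthonormal ℂ (s.restrict v) := by
    rw [orthonormal_iff_ite]
    rintro ⟨i, hi⟩ ⟨j, hj⟩
    have hi' : (i : ℕ) < a := hi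
    have hj' : (j : ℕ) < a := hj
    have : (inner ℂ (s.restrict v ⟨i, hi⟩) (s.restrict v ⟨j, hj⟩) : ℂ)
        = (Vᴴ * V) ⟨i, hi'⟩ ⟨j, hj'⟩ := by
      rw [show s.restrict v ⟨i, hi⟩ = col ⟨i, hi'⟩ from dif_pos hi',
        show s.restrict v ⟨j, hj⟩ = col ⟨j, hj'⟩ from dif_pos hj']
      simp only [Set.restrict_apply, hv, dif_pos hi', dif_pos hj', hcol]
      simp only [PiLp.inner_apply, WithLp.equiv_symm_apply, WithLp.ofLp_toLp, RCLike.inner_apply,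
        Matrix.mul_apply, Matrix.conjTranspose_apply]
      refine Finset.sum_congr rfl (fun _ _ => ?_)
      rw [mul_comm]
      rfl
    rw [this, hV]
    simp only [Matrix.one_apply]
    congr 1
    simp [Subtype.ext_iff, Fin.ext_iff]
  obtain ⟨b, hb⟩ := horth.exists_orthonormalBasis_extension_of_card_eq
    (finrank_euclideanSpace (𝕜 := ℂ) (ι := Fin x))
  refine ⟨Matrix.of fun i j => (WithLp.equiv 2 _) (b j) i, ?_, ?_⟩
  · ext j k
    have hbo := orthonormal_iff_ite.mp b.orthonormal j k
    simp only [PiLp.inner_apply, RCLike.inner_apply] at hbo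
    simp only [Matrix.mul_apply, Matrix.conjTranspose_apply, Matrix.of_apply,
      Matrix.one_apply]
    rw [← hbo]
    refine Finset.sum_congr rfl (fun _ _ => ?_)
    rw [mul_comm]
    rfl
  · intro p i
    have hmem : (Fin.castLE hax.le p : Fin x) ∈ s := by
      simp only [hs, Set.mem_setOf_eq]
      exact p.2
    have hbv := hb _ hmem
    show (WithLp.equiv 2 _) (b (Fin.castLE hax.le p)) i = V i p
    rw [hbv]
    simp only [hv]
    rw [dif_pos]
    · simp only [hcol]
      have : (⟨((Fin.castLE hax.le p : Fin x) : ℕ), p.2⟩ : Fin a) = p := by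
        simp [Fin.ext_iff]
      rw [this]
      rfl
    · exact p.2

lemma conj_entry {x k k' : ℕ} (U M : Matrix (Fin x) (Fin x) ℂ)
    (ι : Fin k → Fin x) (ι' : Fin k' → Fin x) (p : Fin k) (q : Fin k') :
    (Uᴴ * M * U) (ι p) (ι' q)
      = ((U.submatrix id ι)ᴴ * M * (U.submatrix id ι')) p q := by
  simp [Matrix.mul_apply, Matrix.conjTranspose_apply, Matrix.submatrix_apply]

/-- From an isometric *-intertwiner `A → X`, conclude `A ≼ X`. -/
lemma sub_of_hom {A X : MatTup Λ} {V : Matrix (Fin X.deg) (Fin A.deg) ℂ}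
    (hV : Vᴴ * V = 1) (hH : IsHom A.mat X.mat V) : A.Sub X := by
  obtain ⟨a, apos, Am⟩ := A
  obtain ⟨x, xpos, Xm⟩ := X
  have hHa : ∀ l, V * Am l = Xm l * V := fun l => (hH l).1
  have hHs : ∀ l, V * (Am l)ᴴ = (Xm l)ᴴ * V := fun l => (hH l).2
  have hax : a ≤ x := by
    have h1 : (1 : Matrix (Fin a) (Fin a) ℂ).rank = a := by
      rw [Matrix.rank_one, Fintype.card_fin]
    calc a = (Vᴴ * V).rank := by rw [hV, h1]
      _ ≤ V.rank := Matrix.rank_mul_le_right _ _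
      _ ≤ x := Matrix.rank_le_height _
  rcases lt_or_eq_of_le hax with hlt | heq
  · -- strict inclusion: build a complement
    right
    obtain ⟨U, hUU, hUV⟩ := extend_isometry hlt V hV
    have hU2 : U * Uᴴ = 1 := mul_eq_one_comm.mp hUU
    set bn := x - a with hbn
    have hb : 0 < bn := by omega
    have hab : a + bn = x := by omega
    set ι₁ : Fin a → Fin x := fun p => Fin.castLE hlt.le p with hι₁
    set ι₂ : Fin bn → Fin x := fun q => ⟨a + q.val, by omega⟩ with hι₂
    set V₂ : Matrix (Fin x) (Fin bn) ℂ := U.submatrix id ι₂ with hV₂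
    have hV₁ : U.submatrix id ι₁ = V := by
      ext i p
      exact hUV p i
    -- cross-orthogonality
    have hc12 : Vᴴ * V₂ = 0 := by
      ext p q
      have : (Vᴴ * V₂) p q = (Uᴴ * U) (ι₁ p) (ι₂ q) := by
        rw [← hV₁]
        simp [hV₂, Matrix.mul_apply, Matrix.conjTranspose_apply, Matrix.submatrix_apply]
      rw [this, hUU]
      simp only [Matrix.one_apply, Matrix.zero_apply, ite_eq_right_iff]
      intro hcc
      exfalso
      have := congrArg Fin.val hcc
      simp only [hι₁, hι₂, Fin.coe_castLE] at this
      omega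
    have hc21 : V₂ᴴ * V = 0 := by
      have := congrArg Matrix.conjTranspose hc12
      simpa [Matrix.conjTranspose_mul] using this
    have hV2V2 : V₂ᴴ * V₂ = 1 := by
      ext p q
      have : (V₂ᴴ * V₂) p q = (Uᴴ * U) (ι₂ p) (ι₂ q) := by
        simp [hV₂, Matrix.mul_apply, Matrix.conjTranspose_apply, Matrix.submatrix_apply]
      rw [this, hUU]
      simp only [Matrix.one_apply]
      have hiq : ι₂ p = ι₂ q ↔ p = q := by
        simp [hι₂, Fin.ext_iff]
      by_cases hpq : p = q
      · rw [if_pos (hiq.mpr hpq), if_pos hpq]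
      · rw [if_neg (fun hc => hpq (hiq.mp hc)), if_neg hpq]
    set Bm : Λ → Matrix (Fin bn) (Fin bn) ℂ := fun l => V₂ᴴ * Xm l * V₂ with hBm
    refine ⟨⟨a, apos, Am⟩, ⟨bn, hb, Bm⟩, ?_, ?_⟩
    · -- A ≡ A via the identity
      refine ⟨1, Submonoid.one_mem _, matTup_ext rfl ?_⟩
      · intro l
        show 1 * Am l * 1⁻¹ = (Am l).submatrix _ _
        rw [inv_one, Matrix.one_mul, Matrix.mul_one]
        ext i j
        rfl
    · -- X ≡ A ⊕ B via Uᴴ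
      have hUHinv : (Uᴴ)⁻¹ = U := Matrix.inv_eq_left_inv hU2
      refine ⟨Uᴴ, ?_, ?_⟩
      · rw [Matrix.mem_unitaryGroup_iff, Matrix.star_eq_conjTranspose,
          Matrix.conjTranspose_conjTranspose]
        exact hUU
      · apply matTup_ext (show x = a + bn from hab.symm)
        intro l
        show Uᴴ * Xm l * (Uᴴ)⁻¹ = _
        rw [hUHinv]
        -- intertwining consequences
        have hAV : Vᴴ * Xm l = Am l * Vᴴ := by
          have h0 := congrArg Matrix.conjTranspose (hHs l)
          simp only [Matrix.conjTranspose_mul, Matrix.conjTranspose_conjTranspose] at h0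
          exact h0.symm
        have hVXV : Vᴴ * Xm l * V = Am l := by
          rw [hAV, Matrix.mul_assoc, hV, Matrix.mul_one]
        have hVXV₂ : Vᴴ * Xm l * V₂ = 0 := by
          rw [hAV, Matrix.mul_assoc, hc12, Matrix.mul_zero]
        have hV₂XV : V₂ᴴ * Xm l * V = 0 := by
          rw [Matrix.mul_assoc, ← hHa l, ← Matrix.mul_assoc, hc21, Matrix.zero_mul]
        -- now compute entries
        ext i j
        set e := finSumFinEquiv (m := a) (n := bn) with he
        have hκ : ∀ st : Fin a ⊕ Fin bn,
            Fin.cast hab (e st) = Sum.elim ι₁ ι₂ st := by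
          rintro (p | q)
          · simp [he, Fin.ext_iff, hι₁]
          · simp [he, Fin.ext_iff, hι₂, Fin.natAdd]
        set st := e.symm (Fin.cast hab.symm i) with hst
        set tt := e.symm (Fin.cast hab.symm j) with htt
        have hi : i = Fin.cast hab (e st) := by
          rw [hst]
          simp [Fin.ext_iff]
        have hj : j = Fin.cast hab (e tt) := by
          rw [htt]
          simp [Fin.ext_iff]
        show _ = ((MatTup.dsum ⟨a, apos, Am⟩ ⟨bn, hb, Bm⟩).mat l) (Fin.cast hab.symm i) (Fin.cast hab.symm j)
        have hdsum : (MatTup.dsum ⟨a, apos, Am⟩ ⟨bn, hb, Bm⟩).mat l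
            (Fin.cast hab.symm i) (Fin.cast hab.symm j)
            = Matrix.fromBlocks (Am l) 0 0 (Bm l) st tt := by
          show (Matrix.reindex e e (Matrix.fromBlocks (Am l) 0 0 (Bm l))) _ _ = _
          rfl
        rw [hdsum, hi, hj, hκ, hκ]
        rcases st with p | q <;> rcases tt with p' | q'
        · rw [Sum.elim_inl, Sum.elim_inl, conj_entry, hV₁,
            Matrix.fromBlocks_apply₁₁, hVXV]
        · rw [Sum.elim_inl, Sum.elim_inr, conj_entry, hV₁, ← hV₂,
            Matrix.fromBlocks_apply₁₂, hVXV₂]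
        · rw [Sum.elim_inr, Sum.elim_inl, conj_entry, hV₁, ← hV₂,
            Matrix.fromBlocks_apply₂₁, hV₂XV]
        · rw [Sum.elim_inr, Sum.elim_inr, conj_entry, ← hV₂,
            Matrix.fromBlocks_apply₂₂, hBm]
  · -- equal degrees: direct unitary equivalence
    subst heq
    left
    have hVV : V * Vᴴ = 1 := mul_eq_one_comm.mp hV
    refine ⟨V, ?_, matTup_ext rfl ?_⟩
    · rw [Matrix.mem_unitaryGroup_iff, Matrix.star_eq_conjTranspose]
      exact hVV
    · intro l
      show V * Am l * V⁻¹ = (Xm l).submatrix _ _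
      have hVi : V⁻¹ = Vᴴ := Matrix.inv_eq_left_inv hV
      rw [hVi, hHa l, Matrix.mul_assoc, hVV, Matrix.mul_one]
      ext i j
      rfl

open scoped ComplexOrder

lemma comm_of_comm_diag {n : ℕ} (d : Fin n → ℝ) (t : ℝ) (B : Matrix (Fin n) (Fin n) ℂ)
    (h : B * Matrix.diagonal (fun i => (d i : ℂ)) = Matrix.diagonal (fun i => (d i : ℂ)) * B) :
    B * Matrix.diagonal (fun i => if d i = t then (1 : ℂ) else 0)
      = Matrix.diagonal (fun i => if d i = t then (1 : ℂ) else 0) * B := by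
  ext i j
  have hij := congrFun (congrFun h i) j
  simp only [Matrix.mul_diagonal, Matrix.diagonal_mul] at hij ⊢
  by_cases hdi : d i = d j
  · rw [hdi, mul_comm]
  · have hBij : B i j = 0 := by
      have h0 : B i j * ((d j : ℂ) - (d i : ℂ)) = 0 := by
        rw [mul_sub, hij, mul_comm, sub_self]
      rcases mul_eq_zero.mp h0 with h1 | h1
      · exact h1
      · exfalso
        apply hdi
        have := sub_eq_zero.mp h1
        exact_mod_cast this.symm
    rw [hBij, mul_zero, zero_mul]

lemma proj_comm {n : ℕ} {U M N Dg Pd : Matrix (Fin n) (Fin n) ℂ}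
    (hU1 : Uᴴ * U = 1) (hU2 : U * Uᴴ = 1)
    (hspec : M = U * Dg * Uᴴ)
    (hDgPd : ∀ B : Matrix (Fin n) (Fin n) ℂ, B * Dg = Dg * B → B * Pd = Pd * B)
    (hN : M * N = N * M) :
    (U * Pd * Uᴴ) * N = N * (U * Pd * Uᴴ) := by
  have eR : ∀ {m : ℕ} (Z : Matrix (Fin n) (Fin m) ℂ), U * (Uᴴ * Z) = Z := fun Z => by
    rw [← Matrix.mul_assoc, hU2, Matrix.one_mul]
  have eR' : ∀ {m : ℕ} (Z : Matrix (Fin n) (Fin m) ℂ), Uᴴ * (U * Z) = Z := fun Z => by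
    rw [← Matrix.mul_assoc, hU1, Matrix.one_mul]
  set B : Matrix (Fin n) (Fin n) ℂ := Uᴴ * N * U with hB
  have hNB : N = U * B * Uᴴ := by
    rw [hB]
    calc N = U * (Uᴴ * (N * (U * Uᴴ))) := by rw [hU2, Matrix.mul_one, eR]
      _ = U * (Uᴴ * N * U) * Uᴴ := by simp only [Matrix.mul_assoc]
  have hDg : Dg = Uᴴ * M * U := by
    rw [hspec]
    calc Dg = Uᴴ * (U * (Dg * (Uᴴ * U))) := by rw [hU1, Matrix.mul_one, eR']
      _ = Uᴴ * (U * Dg * Uᴴ) * U := by simp only [Matrix.mul_assoc]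
  have hBDg : B * Dg = Dg * B := by
    have e1 : B * Dg = Uᴴ * (N * (M * U)) := by
      rw [hB, hDg]
      calc Uᴴ * N * U * (Uᴴ * M * U)
          = Uᴴ * (N * (U * (Uᴴ * (M * U)))) := by simp only [Matrix.mul_assoc]
        _ = Uᴴ * (N * (M * U)) := by rw [eR]
    have e2 : Dg * B = Uᴴ * (M * (N * U)) := by
      rw [hB, hDg]
      calc Uᴴ * M * U * (Uᴴ * N * U)
          = Uᴴ * (M * (U * (Uᴴ * (N * U)))) := by simp only [Matrix.mul_assoc]
        _ = Uᴴ * (M * (N * U)) := by rw [eR]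
    rw [e1, e2, ← Matrix.mul_assoc N M, ← Matrix.mul_assoc M N, hN]
  have hBPd : B * Pd = Pd * B := hDgPd B hBDg
  calc (U * Pd * Uᴴ) * N
      = U * (Pd * (Uᴴ * (U * (B * Uᴴ)))) := by
        rw [hNB]; simp only [Matrix.mul_assoc]
    _ = U * (Pd * (B * Uᴴ)) := by rw [eR']
    _ = U * ((Pd * B) * Uᴴ) := by simp only [Matrix.mul_assoc]
    _ = U * ((B * Pd) * Uᴴ) := by rw [hBPd]
    _ = U * (B * (Pd * Uᴴ)) := by simp only [Matrix.mul_assoc]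
    _ = U * (B * (Uᴴ * (U * (Pd * Uᴴ)))) := by rw [eR']
    _ = N * (U * Pd * Uᴴ) := by rw [hNB]; simp only [Matrix.mul_assoc]

/-- Shrink a nonzero *-intertwiner to a pair of isometric *-intertwiners out of a
common subtuple. -/
lemma hom_shrink {a x : ℕ} {Am : Λ → Matrix (Fin a) (Fin a) ℂ}
    {Xm : Λ → Matrix (Fin x) (Fin x) ℂ} {T : Matrix (Fin x) (Fin a) ℂ}
    (hT : T ≠ 0) (hH : IsHom Am Xm T) :
    ∃ (p : ℕ) (_ : 0 < p) (A'm : Λ → Matrix (Fin p) (Fin p) ℂ)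
      (J : Matrix (Fin a) (Fin p) ℂ) (K : Matrix (Fin x) (Fin p) ℂ),
      Jᴴ * J = 1 ∧ Kᴴ * K = 1 ∧ IsHom A'm Am J ∧ IsHom A'm Xm K := by
  classical
  have hHa : ∀ l, T * Am l = Xm l * T := fun l => (hH l).1
  have hHs : ∀ l, T * (Am l)ᴴ = (Xm l)ᴴ * T := fun l => (hH l).2
  have hTA : ∀ l, Tᴴ * Xm l = Am l * Tᴴ := by
    intro l
    have h0 := congrArg Matrix.conjTranspose (hHs l)
    simp only [Matrix.conjTranspose_mul, Matrix.conjTranspose_conjTranspose] at h0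
    exact h0.symm
  have hTAs : ∀ l, Tᴴ * (Xm l)ᴴ = (Am l)ᴴ * Tᴴ := by
    intro l
    have h0 := congrArg Matrix.conjTranspose (hHa l)
    simp only [Matrix.conjTranspose_mul, Matrix.conjTranspose_conjTranspose] at h0
    exact h0.symm
  set M : Matrix (Fin a) (Fin a) ℂ := Tᴴ * T with hMdef
  have hMpsd : M.PosSemidef := Matrix.posSemidef_conjTranspose_mul_self T
  have hM : M.IsHermitian := hMpsd.1
  have hMne : M ≠ 0 := fun h => hT (Matrix.conjTranspose_mul_self_eq_zero.mp h)
  have hMA : ∀ l, M * Am l = Am l * M := by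
    intro l
    calc M * Am l = Tᴴ * (T * Am l) := by rw [Matrix.mul_assoc]
      _ = Tᴴ * (Xm l * T) := by rw [hHa]
      _ = (Tᴴ * Xm l) * T := by rw [Matrix.mul_assoc]
      _ = Am l * Tᴴ * T := by rw [hTA]
      _ = Am l * M := by rw [Matrix.mul_assoc]
  have hMAs : ∀ l, M * (Am l)ᴴ = (Am l)ᴴ * M := by
    intro l
    calc M * (Am l)ᴴ = Tᴴ * (T * (Am l)ᴴ) := by rw [Matrix.mul_assoc]
      _ = Tᴴ * ((Xm l)ᴴ * T) := by rw [hHs]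
      _ = (Tᴴ * (Xm l)ᴴ) * T := by rw [Matrix.mul_assoc]
      _ = (Am l)ᴴ * Tᴴ * T := by rw [hTAs]
      _ = (Am l)ᴴ * M := by rw [Matrix.mul_assoc]
  -- spectral theorem
  set U : Matrix (Fin a) (Fin a) ℂ :=
    (Matrix.IsHermitian.eigenvectorUnitary hM : Matrix (Fin a) (Fin a) ℂ) with hUdef
  obtain ⟨hU1, hU2, _⟩ := unitary_facts (Matrix.IsHermitian.eigenvectorUnitary hM).2
  set D : Fin a → ℝ := hM.eigenvalues with hDdef
  set Dg : Matrix (Fin a) (Fin a) ℂ := Matrix.diagonal (fun i => (D i : ℂ)) with hDgdef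
  have hspec : M = U * Dg * Uᴴ := by
    have h0 := hM.spectral_theorem
    rw [h0, ← Matrix.star_eq_conjTranspose]
    rfl
  -- a positive eigenvalue exists
  have hex : ∃ i, D i ≠ 0 := by
    by_contra hc
    push_neg at hc
    apply hMne
    rw [hspec]
    have : Dg = 0 := by
      rw [hDgdef]
      ext i j
      simp [Matrix.diagonal_apply, hc]
    rw [this, Matrix.mul_zero, Matrix.zero_mul]
  obtain ⟨i₀, hi₀⟩ := hex
  set t : ℝ := D i₀ with htdef
  have ht : 0 < t := lt_of_le_of_ne (hMpsd.eigenvalues_nonneg i₀) (Ne.symm hi₀)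
  -- the eigenvalue-t coordinates
  set p : ℕ := Fintype.card {j // D j = t} with hpdef
  have hp : 0 < p := Fintype.card_pos_iff.mpr ⟨⟨i₀, rfl⟩⟩
  set eqv : {j // D j = t} ≃ Fin p := Fintype.equivFinOfCardEq hpdef.symm with heqv
  set sel : Fin p → Fin a := fun k => (eqv.symm k).1 with hseldef
  have hsel : ∀ k, D (sel k) = t := fun k => (eqv.symm k).2
  have hselinj : Function.Injective sel :=
    Subtype.val_injective.comp (Equiv.injective _)
  set J : Matrix (Fin a) (Fin p) ℂ := U.submatrix id sel with hJdef
  have hJJ : Jᴴ * J = 1 := by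
    ext k k'
    have h1 : (Jᴴ * J) k k' = (Uᴴ * U) (sel k) (sel k') := by
      simp [hJdef, Matrix.mul_apply, Matrix.conjTranspose_apply, Matrix.submatrix_apply]
    rw [h1, hU1]
    simp only [Matrix.one_apply]
    by_cases hkk : k = k'
    · rw [if_pos (by rw [hkk]), if_pos hkk]
    · rw [if_neg (fun hc => hkk (hselinj hc)), if_neg hkk]
  -- J consists of eigenvectors
  have hMU : M * U = U * Dg := by
    rw [hspec]
    calc U * Dg * Uᴴ * U = U * Dg * (Uᴴ * U) := by simp only [Matrix.mul_assoc]
      _ = U * Dg := by rw [hU1, Matrix.mul_one]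
  have hMJ : M * J = (t : ℂ) • J := by
    ext i k
    have h1 : (M * J) i k = (M * U) i (sel k) := by
      simp [hJdef, Matrix.mul_apply, Matrix.submatrix_apply]
    rw [h1, hMU, hDgdef, Matrix.mul_diagonal, hsel k]
    simp [hJdef, Matrix.submatrix_apply, mul_comm]
  -- the spectral projection
  set ind : Fin a → ℂ := fun m => if D m = t then 1 else 0 with hinddef
  set Pd : Matrix (Fin a) (Fin a) ℂ := Matrix.diagonal ind with hPddef
  set Ed : Matrix (Fin a) (Fin p) ℂ :=
    Matrix.of (fun m k => if m = sel k then (1 : ℂ) else 0) with hEddef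
  have hJEd : J = U * Ed := by
    ext i k
    simp only [hJdef, hEddef, Matrix.mul_apply, Matrix.of_apply, Matrix.submatrix_apply,
      mul_ite, mul_one, mul_zero, id]
    rw [Finset.sum_ite_eq' Finset.univ (sel k) (fun m => U i m)]
    simp
  have hPdEd : Pd * Ed = Ed := by
    ext m k
    rw [hPddef, Matrix.diagonal_mul]
    by_cases hm : m = sel k
    · subst hm
      simp [hEddef, hinddef, hsel k]
    · simp [hEddef, hm]
  have hEdEd : Ed * Edᴴ = Pd := by
    ext m m'
    simp only [hEddef, hPddef, Matrix.mul_apply, Matrix.conjTranspose_apply,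
      Matrix.of_apply, Matrix.diagonal_apply]
    by_cases hDm : D m = t
    · set k0 : Fin p := eqv ⟨m, hDm⟩ with hk0def
      have hk0 : sel k0 = m := by
        simp [hseldef, hk0def]
      rw [Finset.sum_eq_single k0]
      · rw [hk0]
        by_cases hmm : m = m'
        · subst hmm
          simp [hinddef, hDm]
        · simp [hmm, Ne.symm hmm]
      · intro c _ hc
        rw [if_neg, zero_mul]
        intro hmc
        exact hc (hselinj (by rw [← hmc, hk0])).symm
      · intro hc
        exact absurd (Finset.mem_univ k0) hc
    · have hz : (if m = m' then ind m else 0) = 0 := by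
        simp [hinddef, hDm]
      rw [hz]
      apply Finset.sum_eq_zero
      intro c _
      rw [if_neg, zero_mul]
      intro hmc
      exact hDm (by rw [hmc, hsel c])
  -- commutation with the tuple
  have key : ∀ (N : Matrix (Fin a) (Fin a) ℂ), M * N = N * M →
      J * (Jᴴ * N * J) = N * J := by
    intro N hN
    have hcomm : (U * Pd * Uᴴ) * N = N * (U * Pd * Uᴴ) :=
      proj_comm hU1 hU2 hspec (fun B hB => comm_of_comm_diag D t B hB) hN
    rw [hJEd]
    calc (U * Ed) * ((U * Ed)ᴴ * N * (U * Ed))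
        = U * ((Ed * Edᴴ) * (Uᴴ * (N * (U * Ed)))) := by
          simp only [Matrix.conjTranspose_mul, Matrix.mul_assoc]
      _ = U * (Pd * (Uᴴ * (N * (U * Ed)))) := by rw [hEdEd]
      _ = (U * Pd * Uᴴ) * N * (U * Ed) := by simp only [Matrix.mul_assoc]
      _ = N * (U * Pd * Uᴴ) * (U * Ed) := by rw [hcomm]
      _ = N * (U * (Pd * (Uᴴ * (U * Ed)))) := by simp only [Matrix.mul_assoc]
      _ = N * (U * (Pd * Ed)) := by rw [← Matrix.mul_assoc Uᴴ U Ed, hU1, Matrix.one_mul]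
      _ = N * (U * Ed) := by rw [hPdEd]
  -- the shrunken tuple and the two isometries
  set A'm : Λ → Matrix (Fin p) (Fin p) ℂ := fun l => Jᴴ * Am l * J with hA'def
  have hA's : ∀ l, (A'm l)ᴴ = Jᴴ * (Am l)ᴴ * J := by
    intro l
    rw [hA'def]
    simp only [Matrix.conjTranspose_mul, Matrix.conjTranspose_conjTranspose,
      Matrix.mul_assoc]
  set c : ℂ := ((Real.sqrt t : ℝ) : ℂ)⁻¹ with hcdef
  set K : Matrix (Fin x) (Fin p) ℂ := c • (T * J) with hKdef
  have hsne : Real.sqrt t ≠ 0 := ne_of_gt (Real.sqrt_pos.mpr ht)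
  have hs : Real.sqrt t * Real.sqrt t = t := Real.mul_self_sqrt ht.le
  have hcc : star c * c * (t : ℂ) = 1 := by
    have h1 : star c = c := by
      rw [hcdef]; simp
    rw [h1, hcdef, ← Complex.ofReal_inv, ← Complex.ofReal_mul, ← Complex.ofReal_mul,
      ← Complex.ofReal_one]
    congr 1
    have : (Real.sqrt t)⁻¹ * (Real.sqrt t)⁻¹ * t = (Real.sqrt t * Real.sqrt t)⁻¹ * t := by
      rw [mul_inv]
    rw [this, hs, inv_mul_cancel₀ (ne_of_gt ht)]
  have hKK : Kᴴ * K = 1 := by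
    rw [hKdef, Matrix.conjTranspose_smul, Matrix.smul_mul, Matrix.mul_smul]
    rw [Matrix.conjTranspose_mul]
    have h1 : Jᴴ * Tᴴ * (T * J) = (t : ℂ) • (1 : Matrix (Fin p) (Fin p) ℂ) := by
      calc Jᴴ * Tᴴ * (T * J) = Jᴴ * (M * J) := by
            rw [hMdef]; simp only [Matrix.mul_assoc]
        _ = Jᴴ * ((t : ℂ) • J) := by rw [hMJ]
        _ = (t : ℂ) • (Jᴴ * J) := by rw [Matrix.mul_smul]
        _ = (t : ℂ) • (1 : Matrix (Fin p) (Fin p) ℂ) := by rw [hJJ]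
    rw [h1, smul_smul, smul_smul, hcc, one_smul]
  have hHomJ : IsHom A'm Am J := by
    intro l
    constructor
    · exact key (Am l) (hMA l)
    · rw [hA's]
      exact key ((Am l)ᴴ) (hMAs l)
  have hHomK : IsHom A'm Xm K := by
    intro l
    constructor
    · calc K * A'm l = c • (T * J * (Jᴴ * Am l * J)) := by
            rw [hKdef, Matrix.smul_mul]
      _ = c • (T * (J * (Jᴴ * Am l * J))) := by rw [Matrix.mul_assoc]
      _ = c • (T * (Am l * J)) := by rw [key (Am l) (hMA l)]
      _ = c • (T * Am l * J) := by rw [Matrix.mul_assoc]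
      _ = c • (Xm l * T * J) := by rw [hHa]
      _ = Xm l * K := by
            rw [hKdef, Matrix.mul_smul, Matrix.mul_assoc]
    · calc K * (A'm l)ᴴ = c • (T * J * (Jᴴ * (Am l)ᴴ * J)) := by
            rw [hKdef, hA's, Matrix.smul_mul]
      _ = c • (T * (J * (Jᴴ * (Am l)ᴴ * J))) := by rw [Matrix.mul_assoc]
      _ = c • (T * ((Am l)ᴴ * J)) := by rw [key ((Am l)ᴴ) (hMAs l)]
      _ = c • (T * (Am l)ᴴ * J) := by rw [Matrix.mul_assoc]
      _ = c • ((Xm l)ᴴ * T * J) := by rw [hHs]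
      _ = (Xm l)ᴴ * K := by
            rw [hKdef, Matrix.mul_smul, Matrix.mul_assoc]
  exact ⟨p, hp, A'm, J, K, hJJ, hKK, hHomJ, hHomK⟩

lemma block_mul_rows {x y a : ℕ} (P : Matrix (Fin x) (Fin x) ℂ)
    (Q : Matrix (Fin y) (Fin y) ℂ) (W : Matrix (Fin (x + y)) (Fin a) ℂ) :
    ((Matrix.reindex finSumFinEquiv finSumFinEquiv (Matrix.fromBlocks P 0 0 Q)
        * W).submatrix (fun i => finSumFinEquiv (Sum.inl i)) id
      = P * (W.submatrix (fun i => finSumFinEquiv (Sum.inl i)) id))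
    ∧ ((Matrix.reindex finSumFinEquiv finSumFinEquiv (Matrix.fromBlocks P 0 0 Q)
        * W).submatrix (fun i => finSumFinEquiv (Sum.inr i)) id
      = Q * (W.submatrix (fun i => finSumFinEquiv (Sum.inr i)) id)) := by
  constructor <;> ext i j <;>
    · simp only [Matrix.submatrix_apply, Matrix.mul_apply, Matrix.reindex_apply,
        Equiv.symm_apply_apply, id]
      rw [← Equiv.sum_comp finSumFinEquiv
        (fun k => Matrix.fromBlocks P 0 0 Q _ (finSumFinEquiv.symm k) * W k j)]
      simp only [Equiv.symm_apply_apply]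
      rw [Fintype.sum_sum_type]
      simp [Matrix.fromBlocks_apply₁₁, Matrix.fromBlocks_apply₁₂,
        Matrix.fromBlocks_apply₂₁, Matrix.fromBlocks_apply₂₂]

lemma rows_isometry {x y a : ℕ} (W : Matrix (Fin (x + y)) (Fin a) ℂ) :
    (W.submatrix (fun i => finSumFinEquiv (Sum.inl i)) id)ᴴ
        * (W.submatrix (fun i => finSumFinEquiv (Sum.inl i)) id)
      + (W.submatrix (fun i => finSumFinEquiv (Sum.inr i)) id)ᴴ
        * (W.submatrix (fun i => finSumFinEquiv (Sum.inr i)) id) = Wᴴ * W := by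
  ext p q
  simp only [Matrix.add_apply, Matrix.mul_apply, Matrix.conjTranspose_apply,
    Matrix.submatrix_apply, id]
  rw [← Equiv.sum_comp finSumFinEquiv (fun k => star (W k p) * W k q),
    Fintype.sum_sum_type]

lemma block_hom_split {a x y : ℕ} (Am : Λ → Matrix (Fin a) (Fin a) ℂ)
    (Xm : Λ → Matrix (Fin x) (Fin x) ℂ) (Ym : Λ → Matrix (Fin y) (Fin y) ℂ)
    (W : Matrix (Fin (x + y)) (Fin a) ℂ)
    (hH : IsHom Am (fun l => Matrix.reindex finSumFinEquiv finSumFinEquiv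
      (Matrix.fromBlocks (Xm l) 0 0 (Ym l))) W) :
    IsHom Am Xm (W.submatrix (fun i => finSumFinEquiv (Sum.inl i)) id)
      ∧ IsHom Am Ym (W.submatrix (fun i => finSumFinEquiv (Sum.inr i)) id) := by
  have key : ∀ (N : Λ → Matrix (Fin a) (Fin a) ℂ)
      (Xm' : Λ → Matrix (Fin x) (Fin x) ℂ) (Ym' : Λ → Matrix (Fin y) (Fin y) ℂ)
      (hN : ∀ l, W * N l = (Matrix.reindex finSumFinEquiv finSumFinEquiv
        (Matrix.fromBlocks (Xm' l) 0 0 (Ym' l))) * W) (l : Λ),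
      (W.submatrix (fun i => finSumFinEquiv (Sum.inl i)) id) * N l
          = Xm' l * (W.submatrix (fun i => finSumFinEquiv (Sum.inl i)) id)
        ∧ (W.submatrix (fun i => finSumFinEquiv (Sum.inr i)) id) * N l
          = Ym' l * (W.submatrix (fun i => finSumFinEquiv (Sum.inr i)) id) := by
    intro N Xm' Ym' hN l
    have h1 : (W * N l).submatrix (fun i => finSumFinEquiv (Sum.inl i)) id
        = (W.submatrix (fun i => finSumFinEquiv (Sum.inl i)) id) * N l := by
      ext i j
      simp [Matrix.submatrix_apply, Matrix.mul_apply]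
    have h2 : (W * N l).submatrix (fun i => finSumFinEquiv (Sum.inr i)) id
        = (W.submatrix (fun i => finSumFinEquiv (Sum.inr i)) id) * N l := by
      ext i j
      simp [Matrix.submatrix_apply, Matrix.mul_apply]
    constructor
    · rw [← h1, hN l, (block_mul_rows (Xm' l) (Ym' l) W).1]
    · rw [← h2, hN l, (block_mul_rows (Xm' l) (Ym' l) W).2]
  have keyA := key (fun l => Am l) Xm Ym (fun l => (hH l).1)
  have keyAs := key (fun l => (Am l)ᴴ) (fun l => (Xm l)ᴴ) (fun l => (Ym l)ᴴ) (fun l => by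
    rw [(hH l).2]
    congr 1
    exact block_conjTranspose _ _)
  exact ⟨fun l => ⟨(keyA l).1, (keyAs l).1⟩, fun l => ⟨(keyA l).2, (keyAs l).2⟩⟩

lemma main {Λ : Type*} (X Y Z : MatTup Λ)
    (hZX : Z.Disj X) (hZY : Z.Disj Y) : Z.Disj (X.dsum Y) := by
  rintro ⟨A, hAZ, hAXY⟩
  obtain ⟨V, hVV, hVH⟩ := hom_of_sub hAZ
  obtain ⟨W, hWW, hWH⟩ := hom_of_sub hAXY
  have hWH' : IsHom A.mat (fun l => Matrix.reindex finSumFinEquiv finSumFinEquiv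
      (Matrix.fromBlocks (X.mat l) 0 0 (Y.mat l))) W := hWH
  obtain ⟨hHX, hHY⟩ := block_hom_split A.mat X.mat Y.mat W hWH'
  set W₁ := W.submatrix (fun i => finSumFinEquiv (Sum.inl i)) id with hW₁
  set W₂ := W.submatrix (fun i => finSumFinEquiv (Sum.inr i)) id with hW₂
  have hsum : W₁ᴴ * W₁ + W₂ᴴ * W₂ = 1 := by
    rw [hW₁, hW₂]
    exact (rows_isometry (x := X.deg) (y := Y.deg) W).trans hWW
  have hne : W₁ ≠ 0 ∨ W₂ ≠ 0 := by
    by_contra hc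
    push_neg at hc
    rw [hc.1, hc.2] at hsum
    simp only [Matrix.conjTranspose_zero, Matrix.mul_zero, Matrix.zero_mul, add_zero,
      zero_add] at hsum
    have h00 : (0 : Matrix (Fin A.deg) (Fin A.deg) ℂ) ⟨0, A.deg_pos⟩ ⟨0, A.deg_pos⟩
        = (1 : Matrix (Fin A.deg) (Fin A.deg) ℂ) ⟨0, A.deg_pos⟩ ⟨0, A.deg_pos⟩ := by
      rw [hsum]
    rw [Matrix.zero_apply, Matrix.one_apply_eq] at h00
    exact zero_ne_one h00
  rcases hne with hne | hne
  · obtain ⟨p, hp, A'm, J, K, hJJ, hKK, hHomJ, hHomK⟩ := hom_shrink hne hHX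
    set A' : MatTup Λ := ⟨p, hp, A'm⟩ with hA'
    have hVJ : (V * J)ᴴ * (V * J) = 1 := by
      rw [Matrix.conjTranspose_mul]
      calc Jᴴ * Vᴴ * (V * J) = Jᴴ * ((Vᴴ * V) * J) := by simp only [Matrix.mul_assoc]
        _ = 1 := by rw [hVV, Matrix.one_mul, hJJ]
    have hSubZ : A'.Sub Z := sub_of_hom hVJ (IsHom.comp hHomJ hVH)
    have hSubX : A'.Sub X := sub_of_hom hKK hHomK
    exact hZX ⟨A', hSubZ, hSubX⟩
  · obtain ⟨p, hp, A'm, J, K, hJJ, hKK, hHomJ, hHomK⟩ := hom_shrink hne hHY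
    set A' : MatTup Λ := ⟨p, hp, A'm⟩ with hA'
    have hVJ : (V * J)ᴴ * (V * J) = 1 := by
      rw [Matrix.conjTranspose_mul]
      calc Jᴴ * Vᴴ * (V * J) = Jᴴ * ((Vᴴ * V) * J) := by simp only [Matrix.mul_assoc]
        _ = 1 := by rw [hVV, Matrix.one_mul, hJJ]
    have hSubZ : A'.Sub Z := sub_of_hom hVJ (IsHom.comp hHomJ hVH)
    have hSubY : A'.Sub Y := sub_of_hom hKK hHomK
    exact hZY ⟨A', hSubZ, hSubY⟩

end MatTupAux

/-- If `Z ⊥ X` and `Z ⊥ Y`, then `Z ⊥ (X ⊕ Y)`. -/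
theorem stmt_1 {Λ : Type*} [Nonempty Λ] (X Y Z : MatTup Λ)
    (hZX : Z.Disj X) (hZY : Z.Disj Y) : Z.Disj (X.dsum Y) := by
  exact MatTupAux.main X Y Z hZX hZY
end
end

section
/- Let X and Y be tuples of complex matrices over the same index set Λ with X ⊥ Y. Then stab(X ⊕ Y) = {U ⊕ V : U ∈ stab(X), V ∈ stab(Y)}, where U ⊕ V denotes the block-diagonal unitary matrix with blocks U and V. -/
noncomputable section

/-- The block-diagonal sum of two square matrices. -/
def matDsum {n m : ℕ} (U : Matrix (Fin n) (Fin n) ℂ) (V : Matrix (Fin m) (Fin m) ℂ) :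
    Matrix (Fin (n + m)) (Fin (n + m)) ℂ :=
  Matrix.reindex finSumFinEquiv finSumFinEquiv (Matrix.fromBlocks U 0 0 V)

open Matrix

namespace MT

variable {Λ : Type*}

lemma inv_of_unitary {n : Type*} [Fintype n] [DecidableEq n] {U : Matrix n n ℂ}
    (h : U ∈ Matrix.unitaryGroup n ℂ) : U⁻¹ = star U :=
  Matrix.inv_eq_right_inv (Matrix.mem_unitaryGroup_iff.mp h)

lemma ext' {X Y : MatTup Λ} (h : X.deg = Y.deg)
    (hm : ∀ l, Y.mat l = (X.mat l).submatrix (Fin.cast h.symm) (Fin.cast h.symm)) : X = Y := by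
  obtain ⟨n, pn, M⟩ := X; obtain ⟨m, pm, N⟩ := Y
  dsimp at h; subst h
  simp only [MatTup.mk.injEq, heq_eq_eq, true_and]
  funext l
  have h2 := hm l
  dsimp at h2
  rw [h2]
  ext i j
  rfl

lemma act_eq_self_iff {X : MatTup Λ} {U : Matrix (Fin X.deg) (Fin X.deg) ℂ}
    (hU : U ∈ Matrix.unitaryGroup (Fin X.deg) ℂ) :
    X.act U = X ↔ ∀ l, U * X.mat l = X.mat l * U := by
  have hinv : U⁻¹ = star U := inv_of_unitary hU
  have h1 : star U * U = 1 := Matrix.mem_unitaryGroup_iff'.mp hU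
  have h2 : U * star U = 1 := Matrix.mem_unitaryGroup_iff.mp hU
  obtain ⟨n, pn, M⟩ := X
  constructor
  · intro h l
    simp only [MatTup.act, MatTup.mk.injEq, heq_eq_eq, true_and] at h
    have := congrFun h l
    calc U * M l = U * M l * U⁻¹ * U := by rw [hinv, Matrix.mul_assoc, h1, Matrix.mul_one]
    _ = M l * U := by rw [this]
  · intro h
    simp only [MatTup.act, MatTup.mk.injEq, heq_eq_eq, true_and]
    funext l
    rw [h l, hinv, Matrix.mul_assoc, h2, Matrix.mul_one]

lemma uequiv_refl (X : MatTup Λ) : X.UEquiv X := by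
  refine ⟨1, one_mem _, ?_⟩
  obtain ⟨n, pn, M⟩ := X
  simp [MatTup.act]

lemma uequiv_act (X : MatTup Λ) {U} (hU : U ∈ Matrix.unitaryGroup (Fin X.deg) ℂ) :
    X.UEquiv (X.act U) := ⟨U, hU, rfl⟩

lemma deg_of_uequiv {X Y : MatTup Λ} (h : X.UEquiv Y) : X.deg = Y.deg := by
  obtain ⟨U, hU, hact⟩ := h
  have := congrArg MatTup.deg hact
  exact this

lemma uequiv_symm {X Y : MatTup Λ} (h : X.UEquiv Y) : Y.UEquiv X := by
  obtain ⟨U, hU, hact⟩ := h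
  obtain ⟨n, pn, M⟩ := X; obtain ⟨m, pm, N⟩ := Y
  have hd : n = m := congrArg MatTup.deg hact
  subst hd
  simp only [MatTup.act, MatTup.mk.injEq, heq_eq_eq, true_and] at hact
  refine ⟨star U, Unitary.star_mem hU, ?_⟩
  simp only [MatTup.act, MatTup.mk.injEq, heq_eq_eq, true_and]
  funext l
  have h1 : star U * U = 1 := Matrix.mem_unitaryGroup_iff'.mp hU
  have h2 : U * star U = 1 := Matrix.mem_unitaryGroup_iff.mp hU
  have hinvU : U⁻¹ = star U := inv_of_unitary hU
  have hinv : (star U)⁻¹ = U := Matrix.inv_eq_right_inv h1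
  rw [hinv, ← congrFun hact l, hinvU]
  calc star U * (U * M l * star U) * U
      = (star U * U) * M l * (star U * U) := by noncomm_ring
    _ = M l := by rw [h1]; simp

lemma uequiv_trans {X Y Z : MatTup Λ} (h1 : X.UEquiv Y) (h2 : Y.UEquiv Z) : X.UEquiv Z := by
  obtain ⟨U, hU, hactU⟩ := h1
  obtain ⟨V, hV, hactV⟩ := h2
  obtain ⟨n, pn, M⟩ := X; obtain ⟨m, pm, N⟩ := Y
  have hd : n = m := congrArg MatTup.deg hactU
  subst hd
  simp only [MatTup.act, MatTup.mk.injEq, heq_eq_eq, true_and] at hactU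
  refine ⟨V * U, mul_mem hV hU, ?_⟩
  rw [← hactV]
  simp only [MatTup.act, MatTup.mk.injEq, heq_eq_eq, true_and]
  funext l
  rw [← congrFun hactU l, inv_of_unitary hU, inv_of_unitary hV, inv_of_unitary (mul_mem hV hU)]
  simp [Matrix.mul_assoc, Matrix.star_mul]

end MT

namespace MT

variable {Λ : Type*}

def permMat {n : Type*} [Fintype n] [DecidableEq n] (e : n ≃ n) : Matrix n n ℂ :=
  Matrix.of fun i j => if e i = j then 1 else 0

lemma permMat_mul {n : Type*} [Fintype n] [DecidableEq n] (e : n ≃ n) (M : Matrix n n ℂ) :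
    permMat e * M = M.submatrix e id := by
  ext i j
  simp [permMat, Matrix.mul_apply, ite_mul, Finset.sum_ite_eq]

lemma mul_permMat_star {n : Type*} [Fintype n] [DecidableEq n] (e : n ≃ n) (M : Matrix n n ℂ) :
    M * star (permMat e) = M.submatrix id e := by
  ext i j
  simp [Matrix.mul_apply, permMat, Matrix.star_apply, apply_ite (star : ℂ → ℂ), mul_ite,
    Finset.sum_ite_eq]

lemma permMat_mem {n : Type*} [Fintype n] [DecidableEq n] (e : n ≃ n) :
    permMat e ∈ Matrix.unitaryGroup n ℂ := by
  rw [Matrix.mem_unitaryGroup_iff]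
  rw [mul_permMat_star]
  ext i j
  simp [permMat, Matrix.one_apply, e.injective.eq_iff, Matrix.submatrix_apply]

lemma act_perm (X : MatTup Λ) (e : Fin X.deg ≃ Fin X.deg) :
    X.act (permMat e) = ⟨X.deg, X.deg_pos, fun l => (X.mat l).submatrix e e⟩ := by
  obtain ⟨n, pn, M⟩ := X
  simp only [MatTup.act, MatTup.mk.injEq, heq_eq_eq, true_and]
  funext l
  rw [inv_of_unitary (permMat_mem e), permMat_mul, mul_permMat_star, Matrix.submatrix_submatrix]
  rfl

def restrTup (Z : MatTup Λ) (S : Finset (Fin Z.deg)) (hS : 0 < S.card) : MatTup Λ :=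
  ⟨S.card, hS, fun l => Matrix.of fun i j =>
    Z.mat l (S.orderIsoOfFin rfl i) (S.orderIsoOfFin rfl j)⟩

lemma restr_sub (Z : MatTup Λ) (S : Finset (Fin Z.deg)) (hS : 0 < S.card)
    (hoff : ∀ l i j, i ∈ S → j ∉ S → Z.mat l i j = 0 ∧ Z.mat l j i = 0) :
    (restrTup Z S hS).Sub Z := by
  classical
  by_cases hU : S = Finset.univ
  · left
    apply uequiv_symm
    subst hU
    have hcard : Z.deg = (Finset.univ : Finset (Fin Z.deg)).card := by simp
    set e0 := (Finset.univ : Finset (Fin Z.deg)).orderIsoOfFin rfl with he0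
    set σ : Fin Z.deg ≃ Fin Z.deg :=
      (finCongr hcard).trans (e0.toEquiv.trans (Equiv.subtypeUnivEquiv (fun x => Finset.mem_univ x)))
      with hσdef
    have hact := act_perm Z σ
    refine ⟨permMat σ, permMat_mem σ, ?_⟩
    rw [hact]
    refine ext' hcard (fun l => ?_)
    funext i j
    simp only [restrTup, Matrix.of_apply, Matrix.submatrix_apply]
    have hσ : ∀ p : Fin ((Finset.univ : Finset (Fin Z.deg)).card),
        σ (Fin.cast hcard.symm p) = ↑(e0 p) := by
      intro p
      have hcast : (finCongr hcard) (Fin.cast hcard.symm p) = p := Fin.ext rfl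
      rw [hσdef]
      simp only [Equiv.trans_apply]
      rw [hcast]
      rfl
    show Z.mat l ↑(e0 i) ↑(e0 j) = Z.mat l (σ (Fin.cast hcard.symm i)) (σ (Fin.cast hcard.symm j))
    rw [hσ i, hσ j]
  · right
    have hSc : 0 < (Sᶜ : Finset (Fin Z.deg)).card := by
      rw [Finset.card_compl]
      have := (Finset.card_lt_iff_ne_univ S).mpr hU
      omega
    refine ⟨restrTup Z S hS, restrTup Z Sᶜ hSc, uequiv_refl _, ?_⟩
    have hdeg : Z.deg = S.card + (Sᶜ : Finset (Fin Z.deg)).card := by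
      rw [Finset.card_add_card_compl, Fintype.card_fin]
    set e0 := S.orderIsoOfFin rfl with he0
    set e0c := (Sᶜ : Finset (Fin Z.deg)).orderIsoOfFin rfl with he0c
    set g : Fin S.card ⊕ Fin (Sᶜ : Finset (Fin Z.deg)).card ≃ Fin Z.deg :=
      ((e0.toEquiv.sumCongr e0c.toEquiv).trans
        ((Equiv.refl _).sumCongr (Equiv.subtypeEquivRight (fun x => by simp)))).trans
        (Equiv.sumCompl (· ∈ S)) with hgdef
    set σ : Fin Z.deg ≃ Fin Z.deg := (finCongr hdeg).trans (finSumFinEquiv.symm.trans g)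
      with hσdef
    refine ⟨permMat σ, permMat_mem σ, ?_⟩
    rw [act_perm Z σ]
    refine ext' hdeg (fun l => ?_)
    funext i j
    change Fin (S.card + Sᶜ.card) at i j
    have hσ : ∀ p : Fin (S.card + (Sᶜ : Finset (Fin Z.deg)).card),
        σ (Fin.cast hdeg.symm p) = g (finSumFinEquiv.symm p) := by
      intro p
      have hcast : (finCongr hdeg) (Fin.cast hdeg.symm p) = p := Fin.ext rfl
      rw [hσdef]
      simp only [Equiv.trans_apply]
      rw [hcast]
    have hg1 : ∀ a, g (Sum.inl a) = ↑(e0 a) := by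
      intro a
      rw [hgdef]
      simp [Equiv.sumCompl_apply_inl, Equiv.sumCongr_apply, Equiv.subtypeEquivRight]
    have hg2 : ∀ b, g (Sum.inr b) = ↑(e0c b) := by
      intro b
      rw [hgdef]
      simp [Equiv.sumCompl_apply_inr, Equiv.sumCongr_apply, Equiv.subtypeEquivRight]
      rfl
    simp only [MatTup.dsum, Matrix.submatrix_apply, Matrix.reindex_apply,
      Matrix.submatrix_apply]
    show (Matrix.fromBlocks (n := Fin S.card) (o := Fin Sᶜ.card) (l := Fin S.card) (m := Fin Sᶜ.card)
      ((restrTup Z S hS).mat l) 0 0 ((restrTup Z Sᶜ hSc).mat l))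
      (finSumFinEquiv.symm i) (finSumFinEquiv.symm j) = Z.mat l (σ (Fin.cast hdeg.symm i)) (σ (Fin.cast hdeg.symm j))
    rw [hσ i, hσ j]
    rcases ha : finSumFinEquiv.symm i with a | a <;> rcases hb : finSumFinEquiv.symm j with b | b
    · rw [hg1 a, hg1 b]
      rfl
    · rw [hg1 a, hg2 b]
      show (0 : ℂ) = _
      exact ((hoff l _ _ (e0 a).2 (by have := (e0c b).2; rw [Finset.mem_compl] at this; exact this)).1).symm
    · rw [hg2 a, hg1 b]
      show (0 : ℂ) = _
      exact ((hoff l _ _ (e0 b).2 (by have := (e0c a).2; rw [Finset.mem_compl] at this; exact this)).2).symm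
    · rw [hg2 a, hg2 b]
      rfl

end MT
namespace MT

variable {Λ : Type*}

lemma sub_congr_right {A Z Z' : MatTup Λ} (hZ : Z.UEquiv Z') (hA : A.Sub Z') : A.Sub Z := by
  rcases hA with h | ⟨A', B', h1, h2⟩
  · rcases em (Z = Z') with rfl | _
    · left; exact h
    · left; exact uequiv_trans h (uequiv_symm hZ)
  · right; exact ⟨A', B', h1, uequiv_trans hZ h2⟩

lemma sub_of_uequiv_left {A A' Z : MatTup Λ} (h : A.UEquiv A') (hs : A'.Sub Z) : A.Sub Z := by
  rcases hs with h2 | ⟨A2, B2, h1, h2⟩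
  · left; exact uequiv_trans h h2
  · right; exact ⟨A2, B2, uequiv_trans h h1, h2⟩

lemma sum_coe_extend {α : Type*} [Fintype α] [DecidableEq α] (S : Finset α) (f : α → ℂ)
    (hf : ∀ x, x ∉ S → f x = 0) : ∑ x : ↥S, f ↑x = ∑ x, f x := by
  rw [Finset.sum_coe_sort S f]
  exact Finset.sum_subset (Finset.subset_univ S) (fun x _ hx => hf x hx)

lemma conj_reduce {n : Type*} [Fintype n] [DecidableEq n] {U : Matrix n n ℂ}
    (D : Matrix n n ℂ) (hU : U ∈ Matrix.unitaryGroup n ℂ) :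
    star U * (U * D * star U) * U = D := by
  have h1 := Matrix.mem_unitaryGroup_iff'.mp hU
  simp only [Matrix.mul_assoc]
  rw [h1, Matrix.mul_one, ← Matrix.mul_assoc, h1, Matrix.one_mul]

end MT
namespace MT

variable {Λ : Type*}

open scoped ComplexOrder in
lemma key (X Y : MatTup Λ) (hd : X.Disj Y) (B : Matrix (Fin X.deg) (Fin Y.deg) ℂ)
    (h1 : ∀ l, B * Y.mat l = X.mat l * B)
    (h2 : ∀ l, Bᴴ * X.mat l = Y.mat l * Bᴴ) : B = 0 := by
  classical
  by_contra hB
  -- spectral data for H = Bᴴ B and K = B Bᴴ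
  set H : Matrix (Fin Y.deg) (Fin Y.deg) ℂ := Bᴴ * B with hHdef
  set K : Matrix (Fin X.deg) (Fin X.deg) ℂ := B * Bᴴ with hKdef
  have hH : H.IsHermitian := Matrix.isHermitian_conjTranspose_mul_self B
  have hK : K.IsHermitian := Matrix.isHermitian_mul_conjTranspose_self B
  set P : Matrix (Fin Y.deg) (Fin Y.deg) ℂ := (hH.eigenvectorUnitary : Matrix (Fin Y.deg) (Fin Y.deg) ℂ) with hPdef
  set Q : Matrix (Fin X.deg) (Fin X.deg) ℂ := (hK.eigenvectorUnitary : Matrix (Fin X.deg) (Fin X.deg) ℂ) with hQdef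
  have hP : P ∈ Matrix.unitaryGroup (Fin Y.deg) ℂ := SetLike.coe_mem _
  have hQ : Q ∈ Matrix.unitaryGroup (Fin X.deg) ℂ := SetLike.coe_mem _
  have hP1 : star P * P = 1 := Matrix.mem_unitaryGroup_iff'.mp hP
  have hP2 : P * star P = 1 := Matrix.mem_unitaryGroup_iff.mp hP
  have hQ1 : star Q * Q = 1 := Matrix.mem_unitaryGroup_iff'.mp hQ
  have hQ2 : Q * star Q = 1 := Matrix.mem_unitaryGroup_iff.mp hQ
  set eigH := hH.eigenvalues with heigH
  set eigK := hK.eigenvalues with heigK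
  set dH : Fin Y.deg → ℂ := fun j => ((eigH j : ℝ) : ℂ) with hdH
  set dK : Fin X.deg → ℂ := fun i => ((eigK i : ℝ) : ℂ) with hdK
  have hDiagH : star P * H * P = Matrix.diagonal dH := by
    conv_lhs => rw [hH.spectral_theorem, Unitary.conjStarAlgAut_apply]
    rw [← hPdef, conj_reduce _ hP]
    rfl
  have hDiagK : star Q * K * Q = Matrix.diagonal dK := by
    conv_lhs => rw [hK.spectral_theorem, Unitary.conjStarAlgAut_apply]
    rw [← hQdef, conj_reduce _ hQ]
    rfl
  -- the transported intertwiner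
  set B' : Matrix (Fin X.deg) (Fin Y.deg) ℂ := star Q * B * P with hB'def
  have hB't : B'ᴴ = star P * Bᴴ * Q := by
    rw [hB'def]
    simp [Matrix.conjTranspose_mul, Matrix.star_eq_conjTranspose, Matrix.mul_assoc]
  have hD : B'ᴴ * B' = Matrix.diagonal dH := by
    rw [hB't, hB'def, ← hDiagH, hHdef]
    simp only [Matrix.mul_assoc]
    rw [← Matrix.mul_assoc Q (star Q), hQ2, Matrix.one_mul]
  have hD' : B' * B'ᴴ = Matrix.diagonal dK := by
    rw [hB't, hB'def, ← hDiagK, hKdef]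
    simp only [Matrix.mul_assoc]
    rw [← Matrix.mul_assoc P (star P), hP2, Matrix.one_mul]
  -- transported tuples
  set Xm : Λ → Matrix (Fin X.deg) (Fin X.deg) ℂ := fun l => star Q * X.mat l * Q with hXm
  set Ym : Λ → Matrix (Fin Y.deg) (Fin Y.deg) ℂ := fun l => star P * Y.mat l * P with hYm
  have hint1 : ∀ l, B' * Ym l = Xm l * B' := by
    intro l
    simp only [hB'def, hXm, hYm, Matrix.mul_assoc]
    rw [← Matrix.mul_assoc P (star P), hP2, Matrix.one_mul,
        ← Matrix.mul_assoc Q (star Q), hQ2, Matrix.one_mul,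
        ← Matrix.mul_assoc B (Y.mat l), h1 l]
    simp only [Matrix.mul_assoc]
  have hint2 : ∀ l, B'ᴴ * Xm l = Ym l * B'ᴴ := by
    intro l
    simp only [hB't, hXm, hYm, Matrix.mul_assoc]
    rw [← Matrix.mul_assoc Q (star Q), hQ2, Matrix.one_mul,
        ← Matrix.mul_assoc P (star P), hP2, Matrix.one_mul,
        ← Matrix.mul_assoc Bᴴ (X.mat l), h2 l]
    simp only [Matrix.mul_assoc]
  -- commutation with the diagonal matrices
  have hYD : ∀ l, Ym l * Matrix.diagonal dH = Matrix.diagonal dH * Ym l := by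
    intro l
    rw [← hD]
    calc Ym l * (B'ᴴ * B') = (Ym l * B'ᴴ) * B' := (Matrix.mul_assoc (Ym l) B'ᴴ B').symm
      _ = B'ᴴ * (Xm l * B') := by rw [← hint2 l]; exact Matrix.mul_assoc _ _ _
      _ = B'ᴴ * (B' * Ym l) := by rw [← hint1 l]
      _ = (B'ᴴ * B') * Ym l := (Matrix.mul_assoc B'ᴴ B' (Ym l)).symm
  have hXD : ∀ l, Xm l * Matrix.diagonal dK = Matrix.diagonal dK * Xm l := by
    intro l
    rw [← hD']
    calc Xm l * (B' * B'ᴴ) = (Xm l * B') * B'ᴴ := (Matrix.mul_assoc (Xm l) B' B'ᴴ).symm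
      _ = B' * (Ym l * B'ᴴ) := by rw [← hint1 l]; exact Matrix.mul_assoc _ _ _
      _ = B' * (B'ᴴ * Xm l) := by rw [← hint2 l]
      _ = (B' * B'ᴴ) * Xm l := (Matrix.mul_assoc B' B'ᴴ (Xm l)).symm
  have hBD : B' * Matrix.diagonal dH = Matrix.diagonal dK * B' := by
    rw [← hD, ← hD']
    exact (Matrix.mul_assoc B' B'ᴴ B').symm
  -- entrywise vanishing
  have hB0 : ∀ i j, eigK i ≠ eigH j → B' i j = 0 := by
    intro i j hne
    have h : (B' * Matrix.diagonal dH) i j = (Matrix.diagonal dK * B') i j := by rw [hBD]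
    rw [Matrix.mul_diagonal, Matrix.diagonal_mul] at h
    have h2 : B' i j * (dH j - dK i) = 0 := by rw [mul_sub, h]; ring
    rcases mul_eq_zero.mp h2 with h3 | h3
    · exact h3
    · exfalso
      have h4 : dH j = dK i := sub_eq_zero.mp h3
      simp only [hdH, hdK, Complex.ofReal_inj] at h4
      exact hne h4.symm
  have hY0 : ∀ l i j, eigH i ≠ eigH j → Ym l i j = 0 := by
    intro l i j hne
    have h : (Ym l * Matrix.diagonal dH) i j = (Matrix.diagonal dH * Ym l) i j := by rw [hYD l]
    rw [Matrix.mul_diagonal, Matrix.diagonal_mul] at h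
    have h2 : Ym l i j * (dH j - dH i) = 0 := by rw [mul_sub, h]; ring
    rcases mul_eq_zero.mp h2 with h3 | h3
    · exact h3
    · exfalso
      have h4 : dH j = dH i := sub_eq_zero.mp h3
      simp only [hdH, Complex.ofReal_inj] at h4
      exact hne h4.symm
  have hX0 : ∀ l i j, eigK i ≠ eigK j → Xm l i j = 0 := by
    intro l i j hne
    have h : (Xm l * Matrix.diagonal dK) i j = (Matrix.diagonal dK * Xm l) i j := by rw [hXD l]
    rw [Matrix.mul_diagonal, Matrix.diagonal_mul] at h
    have h2 : Xm l i j * (dK j - dK i) = 0 := by rw [mul_sub, h]; ring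
    rcases mul_eq_zero.mp h2 with h3 | h3
    · exact h3
    · exfalso
      have h4 : dK j = dK i := sub_eq_zero.mp h3
      simp only [hdK, Complex.ofReal_inj] at h4
      exact hne h4.symm
  -- choose a nonzero eigenvalue
  have hHne : H ≠ 0 := by
    rw [hHdef]
    intro h0
    exact hB (Matrix.conjTranspose_mul_self_eq_zero.mp h0)
  have hex : ∃ j, eigH j ≠ 0 := by
    by_contra hall
    push_neg at hall
    apply hHne
    have hz : Matrix.diagonal dH = 0 := by
      ext i j
      by_cases hij : i = j
      · subst hij; simp [Matrix.diagonal_apply_eq, hdH, hall]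
      · simp [Matrix.diagonal_apply_ne _ hij]
    have hspec : H = P * Matrix.diagonal dH * star P := by
      conv_lhs => rw [hH.spectral_theorem, Unitary.conjStarAlgAut_apply]
      rw [← hPdef]
      rfl
    rw [hspec, hz, Matrix.mul_zero, Matrix.zero_mul]
  obtain ⟨j₀, hj₀⟩ := hex
  set c : ℝ := eigH j₀ with hcdef
  have hcnn : 0 ≤ c := Matrix.eigenvalues_conjTranspose_mul_self_nonneg B j₀
  have hcpos : 0 < c := lt_of_le_of_ne hcnn (Ne.symm hj₀)
  -- eigenspace index sets
  set S : Finset (Fin Y.deg) := Finset.univ.filter (fun j => eigH j = c) with hSdef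
  set T : Finset (Fin X.deg) := Finset.univ.filter (fun i => eigK i = c) with hTdef
  have hmemS : ∀ j, j ∈ S ↔ eigH j = c := by intro j; rw [hSdef]; simp
  have hmemT : ∀ i, i ∈ T ↔ eigK i = c := by intro i; rw [hTdef]; simp
  have hj₀S : j₀ ∈ S := (hmemS j₀).mpr rfl
  have hS0 : 0 < S.card := Finset.card_pos.mpr ⟨j₀, hj₀S⟩
  set s : ℂ := (((Real.sqrt c)⁻¹ : ℝ) : ℂ) with hsdef
  have hstars : star s = s := by rw [hsdef]; exact Complex.conj_ofReal _
  have hss : star s * s = ((c⁻¹ : ℝ) : ℂ) := by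
    rw [hstars, hsdef, ← Complex.ofReal_mul, ← mul_inv, Real.mul_self_sqrt hcnn]
  set V0 : Matrix ↥T ↥S ℂ := Matrix.of (fun t j => s * B' ↑t ↑j) with hV0def
  have hF1 : V0ᴴ * V0 = 1 := by
    ext j j'
    rw [Matrix.mul_apply]
    have hterm : ∀ t : ↥T, V0ᴴ j t * V0 t j'
        = (star s * s) * (star (B' ↑t ↑j) * B' ↑t ↑j') := by
      intro t
      rw [Matrix.conjTranspose_apply, hV0def]
      simp only [Matrix.of_apply]
      rw [star_mul']
      ring
    rw [Finset.sum_congr rfl (fun t _ => hterm t), ← Finset.mul_sum]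
    have hext : (∑ t : ↥T, star (B' ↑t ↑j) * B' ↑t ↑j') = ∑ t, star (B' t ↑j) * B' t ↑j' :=
      sum_coe_extend T (fun t => star (B' t ↑j) * B' t ↑j') (fun t ht => by
        have hz : B' t ↑j = 0 := hB0 t ↑j (fun heq => ht ((hmemT t).mpr (heq.trans ((hmemS ↑j).mp j.2))))
        simp only [hz, star_zero, zero_mul])
    rw [hext]
    have hBB : (∑ t, star (B' t ↑j) * B' t ↑j') = (B'ᴴ * B') ↑j ↑j' := by
      rw [Matrix.mul_apply]
      congr 1
    rw [hBB, hD]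
    by_cases hjj : j = j'
    · subst hjj
      rw [Matrix.diagonal_apply_eq, Matrix.one_apply_eq]
      have hdHj : dH ↑j = ((c : ℝ) : ℂ) := by
        rw [hdH]; exact congrArg _ ((hmemS ↑j).mp j.2)
      rw [hdHj, hss, ← Complex.ofReal_mul, inv_mul_cancel₀ (ne_of_gt hcpos), Complex.ofReal_one]
    · rw [Matrix.one_apply_ne hjj,
        Matrix.diagonal_apply_ne _ (fun hc2 => hjj (Subtype.ext hc2)), mul_zero]
  have hF2 : V0 * V0ᴴ = 1 := by
    ext t t'
    rw [Matrix.mul_apply]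
    have hterm : ∀ j : ↥S, V0 t j * V0ᴴ j t'
        = (star s * s) * (B' ↑t ↑j * star (B' ↑t' ↑j)) := by
      intro j
      rw [Matrix.conjTranspose_apply, hV0def]
      simp only [Matrix.of_apply]
      rw [star_mul']
      ring
    rw [Finset.sum_congr rfl (fun j _ => hterm j), ← Finset.mul_sum]
    have hext : (∑ j : ↥S, B' ↑t ↑j * star (B' ↑t' ↑j)) = ∑ j, B' ↑t j * star (B' ↑t' j) :=
      sum_coe_extend S (fun j => B' ↑t j * star (B' ↑t' j)) (fun j hj => by
        have hz : B' ↑t j = 0 := hB0 ↑t j (fun heq => hj ((hmemS j).mpr (heq.symm.trans ((hmemT ↑t).mp t.2))))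
        simp only [hz, zero_mul])
    rw [hext]
    have hBB : (∑ j, B' ↑t j * star (B' ↑t' j)) = (B' * B'ᴴ) ↑t ↑t' := by
      rw [Matrix.mul_apply]
      congr 1
    rw [hBB, hD']
    by_cases htt : t = t'
    · subst htt
      rw [Matrix.diagonal_apply_eq, Matrix.one_apply_eq]
      have hdKt : dK ↑t = ((c : ℝ) : ℂ) := by
        rw [hdK]; exact congrArg _ ((hmemT ↑t).mp t.2)
      rw [hdKt, hss, ← Complex.ofReal_mul, inv_mul_cancel₀ (ne_of_gt hcpos), Complex.ofReal_one]
    · rw [Matrix.one_apply_ne htt,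
        Matrix.diagonal_apply_ne _ (fun hc2 => htt (Subtype.ext hc2)), mul_zero]
  have hF3 : ∀ l, V0 * Matrix.of (fun (p q : ↥S) => Ym l ↑p ↑q)
      = Matrix.of (fun (p q : ↥T) => Xm l ↑p ↑q) * V0 := by
    intro l
    ext t j
    rw [Matrix.mul_apply, Matrix.mul_apply]
    have hterm : ∀ q : ↥S, V0 t q * Matrix.of (fun (p q : ↥S) => Ym l ↑p ↑q) q j
        = s * (B' ↑t ↑q * Ym l ↑q ↑j) := by
      intro q
      rw [hV0def]
      simp only [Matrix.of_apply]
      ring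
    have hterm' : ∀ p : ↥T, Matrix.of (fun (p q : ↥T) => Xm l ↑p ↑q) t p * V0 p j
        = s * (Xm l ↑t ↑p * B' ↑p ↑j) := by
      intro p
      rw [hV0def]
      simp only [Matrix.of_apply]
      ring
    rw [Finset.sum_congr rfl (fun q _ => hterm q), ← Finset.mul_sum,
        Finset.sum_congr rfl (fun p _ => hterm' p), ← Finset.mul_sum]
    congr 1
    have hext1 : (∑ q : ↥S, B' ↑t ↑q * Ym l ↑q ↑j) = ∑ q, B' ↑t q * Ym l q ↑j :=
      sum_coe_extend S (fun q => B' ↑t q * Ym l q ↑j) (fun q hq => by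
        have hz : B' ↑t q = 0 := hB0 ↑t q (fun heq => hq ((hmemS q).mpr (heq.symm.trans ((hmemT ↑t).mp t.2))))
        simp only [hz, zero_mul])
    have hext2 : (∑ p : ↥T, Xm l ↑t ↑p * B' ↑p ↑j) = ∑ p, Xm l ↑t p * B' p ↑j :=
      sum_coe_extend T (fun p => Xm l ↑t p * B' p ↑j) (fun p hp => by
        have hz : B' p ↑j = 0 := hB0 p ↑j (fun heq => hp ((hmemT p).mpr (heq.trans ((hmemS ↑j).mp j.2))))
        simp only [hz, mul_zero])
    rw [hext1, hext2]
    have hmm : (∑ q, B' ↑t q * Ym l q ↑j) = (B' * Ym l) ↑t ↑j := by rw [Matrix.mul_apply]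
    have hmm' : (∑ p, Xm l ↑t p * B' p ↑j) = (Xm l * B') ↑t ↑j := by rw [Matrix.mul_apply]
    rw [hmm, hmm', hint1 l]
  -- card S = card T
  have hcastST : ((S.card : ℂ)) = (T.card : ℂ) := by
    have t1 : Matrix.trace (V0ᴴ * V0) = (S.card : ℂ) := by
      rw [hF1, Matrix.trace_one]; simp [Fintype.card_coe]
    have t2 : Matrix.trace (V0 * V0ᴴ) = (T.card : ℂ) := by
      rw [hF2, Matrix.trace_one]; simp [Fintype.card_coe]
    rw [← t1, ← t2, Matrix.trace_mul_comm]
  have hcard : S.card = T.card := Nat.cast_inj.mp hcastST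
  have hT0 : 0 < T.card := hcard ▸ hS0
  -- the conjugated tuples
  set Ytil : MatTup Λ := ⟨Y.deg, Y.deg_pos, Ym⟩ with hYtil
  set Xtil : MatTup Λ := ⟨X.deg, X.deg_pos, Xm⟩ with hXtil
  have hYeq : Y.UEquiv Ytil := by
    refine ⟨star P, Unitary.star_mem hP, ?_⟩
    have hinv : (star P)⁻¹ = P := Matrix.inv_eq_right_inv hP1
    rw [hYtil]
    show MatTup.mk Y.deg Y.deg_pos (fun l => star P * Y.mat l * (star P)⁻¹) = _
    simp only [MatTup.mk.injEq, heq_eq_eq, true_and]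
    funext l
    rw [hinv, hYm]
  have hXeq : X.UEquiv Xtil := by
    refine ⟨star Q, Unitary.star_mem hQ, ?_⟩
    have hinv : (star Q)⁻¹ = Q := Matrix.inv_eq_right_inv hQ1
    rw [hXtil]
    show MatTup.mk X.deg X.deg_pos (fun l => star Q * X.mat l * (star Q)⁻¹) = _
    simp only [MatTup.mk.injEq, heq_eq_eq, true_and]
    funext l
    rw [hinv, hXm]
  -- restricted tuples and their subordination
  have hoffY : ∀ l i j, i ∈ S → j ∉ S → Ytil.mat l i j = 0 ∧ Ytil.mat l j i = 0 := by
    intro l i j hi hj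
    have hci : eigH i = c := (hmemS i).mp hi
    have hcj : eigH j ≠ c := fun hc2 => hj ((hmemS j).mpr hc2)
    exact ⟨hY0 l i j (fun he => hcj (he ▸ hci)), hY0 l j i (fun he => hcj (he.symm ▸ hci))⟩
  have hoffX : ∀ l i j, i ∈ T → j ∉ T → Xtil.mat l i j = 0 ∧ Xtil.mat l j i = 0 := by
    intro l i j hi hj
    have hci : eigK i = c := (hmemT i).mp hi
    have hcj : eigK j ≠ c := fun hc2 => hj ((hmemT j).mpr hc2)
    exact ⟨hX0 l i j (fun he => hcj (he ▸ hci)), hX0 l j i (fun he => hcj (he.symm ▸ hci))⟩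
  have hsubY : (restrTup Ytil S hS0).Sub Y :=
    sub_congr_right hYeq (restr_sub Ytil S hS0 hoffY)
  have hsubX : (restrTup Xtil T hT0).Sub X :=
    sub_congr_right hXeq (restr_sub Xtil T hT0 hoffX)
  -- the two restricted tuples are unitarily equivalent
  set eSe : Fin S.card ≃ ↥S := (S.orderIsoOfFin rfl).toEquiv with heSe
  set eTe : Fin T.card ≃ ↥T := (T.orderIsoOfFin rfl).toEquiv with heTe
  set ρ : Fin S.card ≃ ↥T := (finCongr hcard).trans eTe with hρ
  set U : Matrix (Fin S.card) (Fin S.card) ℂ := V0.submatrix ρ eSe with hUdef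
  have hUstar : star U = V0ᴴ.submatrix eSe ρ := by
    rw [hUdef, Matrix.star_eq_conjTranspose, Matrix.conjTranspose_submatrix]
  have hUmem : U ∈ Matrix.unitaryGroup (Fin S.card) ℂ := by
    rw [Matrix.mem_unitaryGroup_iff']
    rw [hUstar, hUdef, Matrix.submatrix_mul_equiv, hF1, Matrix.submatrix_one_equiv]
  have hUinv : U⁻¹ = star U := inv_of_unitary hUmem
  have hAeq : (restrTup Ytil S hS0).UEquiv (restrTup Xtil T hT0) := by
    refine ⟨U, hUmem, ?_⟩
    refine ext' hcard (fun l => ?_)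
    have hactm : ((restrTup Ytil S hS0).act U).mat l
        = U * ((Matrix.of fun (p q : ↥S) => Ym l ↑p ↑q).submatrix eSe eSe) * U⁻¹ := rfl
    rw [hactm, hUinv, hUstar, hUdef]
    rw [Matrix.submatrix_mul_equiv, Matrix.submatrix_mul_equiv, hF3 l, Matrix.mul_assoc,
      hF2, Matrix.mul_one]
    funext p q
    show (restrTup Xtil T hT0).mat l p q = (Matrix.of fun (p q : ↥T) => Xm l ↑p ↑q) (ρ (Fin.cast hcard.symm p)) (ρ (Fin.cast hcard.symm q))
    have hρc : ∀ r : Fin T.card, ρ (Fin.cast hcard.symm r) = eTe r := by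
      intro r
      rw [hρ]
      simp only [Equiv.trans_apply]
      exact congrArg (⇑eTe) (Fin.ext rfl)
    rw [hρc p, hρc q]
    rfl
  exact hd ⟨restrTup Ytil S hS0, sub_of_uequiv_left hAeq hsubX, hsubY⟩

end MT

namespace MT

variable {Λ : Type*}

lemma r_mul {n m : ℕ} (M N : Matrix (Fin n ⊕ Fin m) (Fin n ⊕ Fin m) ℂ) :
    M.submatrix finSumFinEquiv.symm finSumFinEquiv.symm *
      N.submatrix finSumFinEquiv.symm finSumFinEquiv.symm
      = (M * N).submatrix finSumFinEquiv.symm finSumFinEquiv.symm :=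
  Matrix.submatrix_mul_equiv M N _ finSumFinEquiv.symm _

lemma r_star {n m : ℕ} (M : Matrix (Fin n ⊕ Fin m) (Fin n ⊕ Fin m) ℂ) :
    star (M.submatrix finSumFinEquiv.symm finSumFinEquiv.symm)
      = (star M).submatrix finSumFinEquiv.symm finSumFinEquiv.symm := by
  rw [Matrix.star_eq_conjTranspose, Matrix.star_eq_conjTranspose,
    Matrix.conjTranspose_submatrix]

lemma submatrix_inj {p q : Type*} (e : p ≃ q) {M N : Matrix q q ℂ}
    (h : M.submatrix e e = N.submatrix e e) : M = N := by
  ext i j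
  have := congrArg (fun M : Matrix p p ℂ => M (e.symm i) (e.symm j)) h
  simpa using this

lemma r_one {n m : ℕ} :
    (1 : Matrix (Fin n ⊕ Fin m) (Fin n ⊕ Fin m) ℂ).submatrix
      finSumFinEquiv.symm finSumFinEquiv.symm = 1 :=
  Matrix.submatrix_one_equiv finSumFinEquiv.symm

lemma fb_eq {n m : ℕ} {a a' : Matrix (Fin n) (Fin n) ℂ} {b b' : Matrix (Fin n) (Fin m) ℂ}
    {c c' : Matrix (Fin m) (Fin n) ℂ} {d d' : Matrix (Fin m) (Fin m) ℂ}
    (h : Matrix.fromBlocks a b c d = Matrix.fromBlocks a' b' c' d') :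
    a = a' ∧ b = b' ∧ c = c' ∧ d = d' := by
  refine ⟨?_, ?_, ?_, ?_⟩
  · have := congrArg Matrix.toBlocks₁₁ h
    simpa [Matrix.toBlocks_fromBlocks₁₁] using this
  · have := congrArg Matrix.toBlocks₁₂ h
    simpa [Matrix.toBlocks_fromBlocks₁₂] using this
  · have := congrArg Matrix.toBlocks₂₁ h
    simpa [Matrix.toBlocks_fromBlocks₂₁] using this
  · have := congrArg Matrix.toBlocks₂₂ h
    simpa [Matrix.toBlocks_fromBlocks₂₂] using this

end MT


/-- If `X ⊥ Y`, then
`stab(X ⊕ Y) = {U ⊕ V : U ∈ stab(X), V ∈ stab(Y)}`. -/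
theorem stmt_2 {Λ : Type*} [Nonempty Λ] (X Y : MatTup Λ) (h : X.Disj Y) :
    (X.dsum Y).stab = {W | ∃ U ∈ X.stab, ∃ V ∈ Y.stab, W = matDsum U V} := by
  classical
  ext W
  have hdm : ∀ l, (X.dsum Y).mat l
      = (Matrix.fromBlocks (X.mat l) 0 0 (Y.mat l)).submatrix
          finSumFinEquiv.symm finSumFinEquiv.symm := by
    intro l
    rw [show (X.dsum Y).mat l = Matrix.reindex finSumFinEquiv finSumFinEquiv
      (Matrix.fromBlocks (X.mat l) 0 0 (Y.mat l)) from rfl, Matrix.reindex_apply]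
  constructor
  · rintro ⟨hWU, hWact⟩
    have hcomm := (MT.act_eq_self_iff hWU).mp hWact
    set W' : Matrix (Fin X.deg ⊕ Fin Y.deg) (Fin X.deg ⊕ Fin Y.deg) ℂ :=
      W.submatrix finSumFinEquiv finSumFinEquiv with hW'def
    have hWrep : W = W'.submatrix finSumFinEquiv.symm finSumFinEquiv.symm := by
      ext i j
      exact (congrArg₂ (fun a b => W a b) (Equiv.apply_symm_apply finSumFinEquiv i) (Equiv.apply_symm_apply finSumFinEquiv j)).symm
    have hcommW' : ∀ l, W' * Matrix.fromBlocks (X.mat l) 0 0 (Y.mat l)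
        = Matrix.fromBlocks (X.mat l) 0 0 (Y.mat l) * W' := by
      intro l
      apply MT.submatrix_inj finSumFinEquiv.symm
      rw [← MT.r_mul, ← MT.r_mul, ← hWrep, ← hdm l]
      exact hcomm l
    have hW'1 : star W' * W' = 1 := by
      apply MT.submatrix_inj finSumFinEquiv.symm
      rw [← MT.r_mul, ← MT.r_star, ← hWrep, MT.r_one]
      exact Matrix.mem_unitaryGroup_iff'.mp hWU
    have hW'2 : W' * star W' = 1 := by
      apply MT.submatrix_inj finSumFinEquiv.symm
      rw [← MT.r_mul, ← MT.r_star, ← hWrep, MT.r_one]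
      exact Matrix.mem_unitaryGroup_iff.mp hWU
    have hstarcomm : ∀ l, star W' * Matrix.fromBlocks (X.mat l) 0 0 (Y.mat l)
        = Matrix.fromBlocks (X.mat l) 0 0 (Y.mat l) * star W' := by
      intro l
      calc star W' * Matrix.fromBlocks (X.mat l) 0 0 (Y.mat l)
          = star W' * (Matrix.fromBlocks (X.mat l) 0 0 (Y.mat l) * (W' * star W')) := by
            rw [hW'2, Matrix.mul_one]
        _ = star W' * (W' * (Matrix.fromBlocks (X.mat l) 0 0 (Y.mat l) * star W')) := by
            rw [← Matrix.mul_assoc (Matrix.fromBlocks (X.mat l) 0 0 (Y.mat l)) W' (star W'),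
              ← hcommW' l, Matrix.mul_assoc]
        _ = (star W' * W') * (Matrix.fromBlocks (X.mat l) 0 0 (Y.mat l) * star W') :=
            (Matrix.mul_assoc _ _ _).symm
        _ = Matrix.fromBlocks (X.mat l) 0 0 (Y.mat l) * star W' := by
            rw [hW'1, Matrix.one_mul]
    set A := W'.toBlocks₁₁ with hA
    set B0 := W'.toBlocks₁₂ with hB0'
    set C0 := W'.toBlocks₂₁ with hC0'
    set D := W'.toBlocks₂₂ with hD'
    have hblocks : W' = Matrix.fromBlocks A B0 C0 D := (Matrix.fromBlocks_toBlocks W').symm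
    have hstarblocks : star W' = Matrix.fromBlocks Aᴴ C0ᴴ B0ᴴ Dᴴ := by
      rw [hblocks, Matrix.star_eq_conjTranspose, Matrix.fromBlocks_conjTranspose]
    have hbcomm : ∀ l, A * X.mat l = X.mat l * A ∧ B0 * Y.mat l = X.mat l * B0 ∧
        C0 * X.mat l = Y.mat l * C0 ∧ D * Y.mat l = Y.mat l * D := by
      intro l
      have hc := hcommW' l
      rw [hblocks, Matrix.fromBlocks_multiply, Matrix.fromBlocks_multiply] at hc
      simp only [Matrix.mul_zero, Matrix.zero_mul, add_zero, zero_add] at hc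
      exact MT.fb_eq hc
    have hbstar : ∀ l, C0ᴴ * Y.mat l = X.mat l * C0ᴴ ∧ B0ᴴ * X.mat l = Y.mat l * B0ᴴ := by
      intro l
      have hc := hstarcomm l
      rw [hstarblocks, Matrix.fromBlocks_multiply, Matrix.fromBlocks_multiply] at hc
      simp only [Matrix.mul_zero, Matrix.zero_mul, add_zero, zero_add] at hc
      obtain ⟨_, h12, h21, _⟩ := MT.fb_eq hc
      exact ⟨h12, h21⟩
    have hd' : Y.Disj X := by
      rintro ⟨A', hy, hx⟩
      exact h ⟨A', hx, hy⟩
    have hB00 : B0 = 0 := MT.key X Y h B0 (fun l => (hbcomm l).2.1) (fun l => (hbstar l).2)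
    have hC00 : C0 = 0 := MT.key Y X hd' C0 (fun l => (hbcomm l).2.2.1) (fun l => (hbstar l).1)
    have hblocks2 : W' = Matrix.fromBlocks A 0 0 D := by rw [hblocks, hB00, hC00]
    have hstar2 : star W' = Matrix.fromBlocks Aᴴ 0 0 Dᴴ := by
      rw [hblocks2, Matrix.star_eq_conjTranspose, Matrix.fromBlocks_conjTranspose]
      simp only [Matrix.conjTranspose_zero]
    have hub1 : Aᴴ * A = 1 ∧ Dᴴ * D = 1 := by
      have hc := hW'1
      rw [hstar2, hblocks2, Matrix.fromBlocks_multiply] at hc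
      simp only [Matrix.mul_zero, Matrix.zero_mul, add_zero, zero_add] at hc
      rw [← Matrix.fromBlocks_one] at hc
      obtain ⟨ha, _, _, hdd⟩ := MT.fb_eq hc
      exact ⟨ha, hdd⟩
    have hAmem : A ∈ Matrix.unitaryGroup (Fin X.deg) ℂ := by
      rw [Matrix.mem_unitaryGroup_iff', Matrix.star_eq_conjTranspose]
      exact hub1.1
    have hDmem : D ∈ Matrix.unitaryGroup (Fin Y.deg) ℂ := by
      rw [Matrix.mem_unitaryGroup_iff', Matrix.star_eq_conjTranspose]
      exact hub1.2
    refine ⟨A, ⟨hAmem, (MT.act_eq_self_iff hAmem).mpr (fun l => (hbcomm l).1)⟩,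
      D, ⟨hDmem, (MT.act_eq_self_iff hDmem).mpr (fun l => (hbcomm l).2.2.2)⟩, ?_⟩
    rw [hWrep, hblocks2]
    rfl
  · rintro ⟨U, ⟨hUmem, hUact⟩, V, ⟨hVmem, hVact⟩, rfl⟩
    have hUcomm := (MT.act_eq_self_iff hUmem).mp hUact
    have hVcomm := (MT.act_eq_self_iff hVmem).mp hVact
    have hmdef : matDsum U V = (Matrix.fromBlocks U 0 0 V).submatrix
        finSumFinEquiv.symm finSumFinEquiv.symm := by
      rw [show matDsum U V = Matrix.reindex finSumFinEquiv finSumFinEquiv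
        (Matrix.fromBlocks U 0 0 V) from rfl, Matrix.reindex_apply]
    have hstarm : star (matDsum U V) = (Matrix.fromBlocks (star U) 0 0 (star V)).submatrix
        finSumFinEquiv.symm finSumFinEquiv.symm := by
      rw [hmdef, MT.r_star]
      congr 1
      rw [Matrix.star_eq_conjTranspose, Matrix.fromBlocks_conjTranspose]
      simp [Matrix.star_eq_conjTranspose]
    have hmem : matDsum U V ∈ Matrix.unitaryGroup (Fin (X.deg + Y.deg)) ℂ := by
      rw [Matrix.mem_unitaryGroup_iff']
      rw [hstarm, hmdef, MT.r_mul, Matrix.fromBlocks_multiply]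
      simp only [Matrix.mul_zero, Matrix.zero_mul, add_zero, zero_add]
      rw [Matrix.mem_unitaryGroup_iff'.mp hUmem, Matrix.mem_unitaryGroup_iff'.mp hVmem,
        Matrix.fromBlocks_one, MT.r_one]
    refine ⟨hmem, (MT.act_eq_self_iff hmem).mpr ?_⟩
    intro l
    rw [hdm l, hmdef]
    erw [MT.r_mul, MT.r_mul]
    rw [Matrix.fromBlocks_multiply,
      Matrix.fromBlocks_multiply]
    simp only [Matrix.mul_zero, Matrix.zero_mul, add_zero, zero_add]
    rw [hUcomm l, hVcomm l]
end
end

section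
/- Let T_1, …, T_n be irreducible tuples of complex matrices over an index set Λ, let τ be a permutation of {1,…,n}, and let N = Σ_{j=1}^n d(T_j). Let A_1, …, A_n be single complex matrices such that (ax1) A_j is a d(T_j)×d(T_j) matrix for each j, and (ax2) whenever j, k ∈ {1,…,n} and V ∈ U_{d(T_j)} satisfy V.T_j = T_k, then V A_j V⁻¹ = A_k. Then every unitary U ∈ U_N satisfying U.(T_1 ⊕ ⋯ ⊕ T_n) = T_{τ(1)} ⊕ ⋯ ⊕ T_{τ(n)} also satisfies U (A_1 ⊕ ⋯ ⊕ A_n) U⁻¹ = A_{τ(1)} ⊕ ⋯ ⊕ A_{τ(n)}. -/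
noncomputable section

/-- The constant tuple whose every entry is the single matrix `M`. -/
def constTup {Λ : Type*} {N : ℕ} (hN : 0 < N) (M : Matrix (Fin N) (Fin N) ℂ) : MatTup Λ :=
  ⟨N, hN, fun _ => M⟩

namespace Stmt4Aux
open Matrix

variable {Λ : Type*}

lemma matTup_ext {X Y : MatTup Λ} (hd : X.deg = Y.deg)
    (hm : ∀ l i j, X.mat l i j = Y.mat l (Fin.cast hd i) (Fin.cast hd j)) : X = Y := by
  obtain ⟨dX, pX, fX⟩ := X
  obtain ⟨dY, pY, fY⟩ := Y
  dsimp at hd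
  subst hd
  simp only [MatTup.mk.injEq, heq_eq_eq, true_and]
  funext l i j
  exact hm l i j

lemma matTup_mat_congr {X Y : MatTup Λ} (e : X = Y) (l : Λ) (i j : Fin X.deg) :
    X.mat l i j = Y.mat l (Fin.cast (congrArg MatTup.deg e) i)
      (Fin.cast (congrArg MatTup.deg e) j) := by subst e; rfl

/-- The degree of a left-associated big direct sum, as a function of the degrees. -/
def D : {k : ℕ} → (Fin k → ℕ) → 0 < k → ℕ
  | 0, _, h => absurd h (lt_irrefl 0)
  | 1, d, _ => d 0
  | k + 2, d, _ => D (fun j : Fin (k + 1) => d j.castSucc) k.succ_pos + d (Fin.last (k + 1))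

lemma heq_fin_cast {m n : ℕ} (h : m = n) (a : Fin m) : HEq (Fin.cast h a) a := by
  subst h; rfl

def splitLast {k : ℕ} (d : Fin (k + 2) → ℕ) :
    (Σ j, Fin (d j)) ≃ (Σ j : Fin (k + 1), Fin (d j.castSucc)) ⊕ Fin (d (Fin.last (k + 1))) where
  toFun p := Fin.lastCases (motive := fun j => Fin (d j) →
      (Σ j : Fin (k + 1), Fin (d j.castSucc)) ⊕ Fin (d (Fin.last (k + 1))))
      (fun a => Sum.inr a) (fun j a => Sum.inl ⟨j, a⟩) p.1 p.2
  invFun := Sum.elim (fun q => ⟨q.1.castSucc, q.2⟩) (fun a => ⟨Fin.last _, a⟩)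
  left_inv p := by
    obtain ⟨j, a⟩ := p
    induction j using Fin.lastCases with
    | last => simp
    | cast j => simp
  right_inv q := by
    rcases q with ⟨j, a⟩ | a <;> simp

def one0 {d : Fin 1 → ℕ} : (Σ j, Fin (d j)) ≃ Fin (d 0) where
  toFun p := Fin.cast (congrArg d (Subsingleton.elim p.1 0)) p.2
  invFun a := ⟨0, a⟩
  left_inv p := by
    obtain ⟨j, a⟩ := p
    exact Sigma.ext (Subsingleton.elim _ _)
      (heq_fin_cast (congrArg d (Subsingleton.elim j 0)) a)
  right_inv a := rfl

/-- Packing equivalence for block indices. -/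
def pk : {k : ℕ} → (d : Fin k → ℕ) → (hk : 0 < k) → (Σ j, Fin (d j)) ≃ Fin (D d hk)
  | 0, _, h => absurd h (lt_irrefl 0)
  | 1, _, _ => one0
  | k + 2, d, _ =>
      (splitLast d).trans
        (((pk (fun j : Fin (k + 1) => d j.castSucc) k.succ_pos).sumCongr
            (Equiv.refl (Fin (d (Fin.last (k + 1)))))).trans finSumFinEquiv)

lemma bigDsum_deg : ∀ {k : ℕ} (T : Fin k → MatTup Λ) (hk : 0 < k),
    (MatTup.bigDsum T hk).deg = D (fun j => (T j).deg) hk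
  | 0, _, h => absurd h (lt_irrefl 0)
  | 1, _, _ => rfl
  | k + 2, T, _ => by
      show (MatTup.bigDsum (fun j : Fin (k + 1) => T j.castSucc) k.succ_pos).deg
          + (T (Fin.last (k + 1))).deg = _
      rw [bigDsum_deg]
      rfl

end Stmt4Aux
namespace Stmt4Aux
open Matrix

variable {Λ : Type*}

/-- Packing equivalence for the blocks of `bigDsum`. -/
def pkT : {k : ℕ} → (T : Fin k → MatTup Λ) → (hk : 0 < k) →
    (Σ j, Fin ((T j).deg)) ≃ Fin ((MatTup.bigDsum T hk).deg)
  | 0, _, h => absurd h (lt_irrefl 0)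
  | 1, T, _ => one0 (d := fun j => (T j).deg)
  | k + 2, T, _ =>
      (splitLast (fun j => (T j).deg)).trans
        (((pkT (fun j : Fin (k + 1) => T j.castSucc) k.succ_pos).sumCongr
            (Equiv.refl (Fin ((T (Fin.last (k + 1))).deg)))).trans finSumFinEquiv)

theorem bigDsum_entry : ∀ {k : ℕ} (T : Fin k → MatTup Λ) (hk : 0 < k) (l : Λ)
    (p q : Σ j, Fin ((T j).deg)),
    (MatTup.bigDsum T hk).mat l (pkT T hk p) (pkT T hk q)
      = Matrix.blockDiagonal' (fun j => (T j).mat l) p q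
  | 0, _, h, _, _, _ => absurd h (lt_irrefl 0)
  | 1, T, _, l, ⟨i, a⟩, ⟨i', b⟩ => by
      have hi : i = 0 := Subsingleton.elim _ _
      have hi' : i' = 0 := Subsingleton.elim _ _
      subst hi; subst hi'
      rw [Matrix.blockDiagonal'_apply_eq]
      rfl
  | k + 2, T, _, l, ⟨i, a⟩, ⟨i', b⟩ => by
      induction i using Fin.lastCases with
      | last =>
        induction i' using Fin.lastCases with
        | last =>
          simp only [MatTup.bigDsum, MatTup.dsum, pkT, splitLast, Equiv.trans_apply,
            Equiv.coe_fn_mk, Fin.lastCases_last, Equiv.sumCongr_apply, Sum.map_inr,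
            Equiv.refl_apply, Matrix.reindex_apply, Matrix.submatrix_apply,
            Equiv.symm_apply_apply, Matrix.fromBlocks_apply₂₂]
          erw [Equiv.trans_apply, Equiv.trans_apply, Equiv.symm_apply_apply, Equiv.trans_apply, Equiv.trans_apply, Equiv.symm_apply_apply]
          simp only [Equiv.coe_fn_mk, Fin.lastCases_last, Fin.lastCases_castSucc, Equiv.sumCongr_apply, Sum.map_inr, Sum.map_inl, Equiv.refl_apply, Matrix.fromBlocks_apply₁₁, Matrix.fromBlocks_apply₁₂, Matrix.fromBlocks_apply₂₁, Matrix.fromBlocks_apply₂₂]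
          rw [Matrix.blockDiagonal'_apply_eq]
        | cast j' =>
          simp only [MatTup.bigDsum, MatTup.dsum, pkT, splitLast, Equiv.trans_apply,
            Equiv.coe_fn_mk, Fin.lastCases_last, Fin.lastCases_castSucc,
            Equiv.sumCongr_apply, Sum.map_inr, Sum.map_inl, Equiv.refl_apply,
            Matrix.reindex_apply, Matrix.submatrix_apply,
            Equiv.symm_apply_apply, Matrix.fromBlocks_apply₂₁]
          erw [Equiv.trans_apply, Equiv.trans_apply, Equiv.symm_apply_apply, Equiv.trans_apply, Equiv.trans_apply, Equiv.symm_apply_apply]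
          simp only [Equiv.coe_fn_mk, Fin.lastCases_last, Fin.lastCases_castSucc, Equiv.sumCongr_apply, Sum.map_inr, Sum.map_inl, Equiv.refl_apply, Matrix.fromBlocks_apply₁₁, Matrix.fromBlocks_apply₁₂, Matrix.fromBlocks_apply₂₁, Matrix.fromBlocks_apply₂₂]
          rw [Matrix.blockDiagonal'_apply_ne]
          · rfl
          · exact fun hc => (Fin.castSucc_lt_last j').ne' hc
      | cast j =>
        induction i' using Fin.lastCases with
        | last =>
          simp only [MatTup.bigDsum, MatTup.dsum, pkT, splitLast, Equiv.trans_apply,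
            Equiv.coe_fn_mk, Fin.lastCases_last, Fin.lastCases_castSucc,
            Equiv.sumCongr_apply, Sum.map_inr, Sum.map_inl, Equiv.refl_apply,
            Matrix.reindex_apply, Matrix.submatrix_apply,
            Equiv.symm_apply_apply, Matrix.fromBlocks_apply₁₂]
          erw [Equiv.trans_apply, Equiv.trans_apply, Equiv.symm_apply_apply, Equiv.trans_apply, Equiv.trans_apply, Equiv.symm_apply_apply]
          simp only [Equiv.coe_fn_mk, Fin.lastCases_last, Fin.lastCases_castSucc, Equiv.sumCongr_apply, Sum.map_inr, Sum.map_inl, Equiv.refl_apply, Matrix.fromBlocks_apply₁₁, Matrix.fromBlocks_apply₁₂, Matrix.fromBlocks_apply₂₁, Matrix.fromBlocks_apply₂₂]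
          rw [Matrix.blockDiagonal'_apply_ne]
          · rfl
          · exact fun hc => (Fin.castSucc_lt_last j).ne hc
        | cast j' =>
          simp only [MatTup.bigDsum, MatTup.dsum, pkT, splitLast, Equiv.trans_apply,
            Equiv.coe_fn_mk, Fin.lastCases_castSucc, Equiv.sumCongr_apply, Sum.map_inl,
            Matrix.reindex_apply, Matrix.submatrix_apply,
            Equiv.symm_apply_apply, Matrix.fromBlocks_apply₁₁]
          erw [Equiv.trans_apply, Equiv.trans_apply, Equiv.symm_apply_apply, Equiv.trans_apply, Equiv.trans_apply, Equiv.symm_apply_apply]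
          simp only [Equiv.coe_fn_mk, Fin.lastCases_last, Fin.lastCases_castSucc, Equiv.sumCongr_apply, Sum.map_inr, Sum.map_inl, Equiv.refl_apply, Matrix.fromBlocks_apply₁₁, Matrix.fromBlocks_apply₁₂, Matrix.fromBlocks_apply₂₁, Matrix.fromBlocks_apply₂₂]
          rw [bigDsum_entry (fun j : Fin (k + 1) => T j.castSucc) k.succ_pos l ⟨j, a⟩ ⟨j', b⟩]
          by_cases hjj : j = j'
          · subst hjj
            rw [Matrix.blockDiagonal'_apply_eq, Matrix.blockDiagonal'_apply_eq]
          · rw [Matrix.blockDiagonal'_apply_ne _ _ _ hjj,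
              Matrix.blockDiagonal'_apply_ne _ _ _
                (fun hc => hjj (Fin.castSucc_injective _ hc))]

end Stmt4Aux
namespace Stmt4Aux
open Matrix

variable {Λ : Type*}

lemma bigDsum_deg_congr : ∀ {k : ℕ} (X Y : Fin k → MatTup Λ) (hk : 0 < k),
    (∀ j, (X j).deg = (Y j).deg) →
    (MatTup.bigDsum X hk).deg = (MatTup.bigDsum Y hk).deg
  | 0, _, _, h, _ => absurd h (lt_irrefl 0)
  | 1, _, _, _, hd => hd 0
  | k + 2, X, Y, _, hd => by
      show (MatTup.bigDsum (fun j : Fin (k + 1) => X j.castSucc) k.succ_pos).deg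
            + (X (Fin.last (k + 1))).deg
          = (MatTup.bigDsum (fun j : Fin (k + 1) => Y j.castSucc) k.succ_pos).deg
            + (Y (Fin.last (k + 1))).deg
      rw [bigDsum_deg_congr (fun j : Fin (k + 1) => X j.castSucc)
          (fun j : Fin (k + 1) => Y j.castSucc) k.succ_pos (fun j => hd j.castSucc),
        hd (Fin.last (k + 1))]

lemma pkT_val_eq : ∀ {k : ℕ} (X Y : Fin k → MatTup Λ) (hk : 0 < k),
    (∀ j, (X j).deg = (Y j).deg) →
    ∀ (p : Σ j, Fin ((X j).deg)) (q : Σ j, Fin ((Y j).deg)),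
      p.1 = q.1 → (p.2 : ℕ) = (q.2 : ℕ) → ((pkT X hk p) : ℕ) = ((pkT Y hk q) : ℕ)
  | 0, _, _, h, _, _, _, _, _ => absurd h (lt_irrefl 0)
  | 1, X, Y, _, hd, ⟨i, a⟩, ⟨i', b⟩, h1, h2 => h2
  | k + 2, X, Y, _, hd, ⟨i, a⟩, ⟨i', b⟩, h1, h2 => by
      dsimp at h1 h2
      subst h1
      induction i using Fin.lastCases with
      | last =>
        simp only [pkT, splitLast, Equiv.trans_apply, Equiv.coe_fn_mk, Fin.lastCases_last,
          Equiv.sumCongr_apply, Sum.map_inr, Equiv.refl_apply]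
        have hc := bigDsum_deg_congr (fun j : Fin (k + 1) => X j.castSucc)
          (fun j : Fin (k + 1) => Y j.castSucc) k.succ_pos (fun j => hd j.castSucc)
        show (MatTup.bigDsum (fun j : Fin (k + 1) => X j.castSucc) k.succ_pos).deg + (a : ℕ)
            = (MatTup.bigDsum (fun j : Fin (k + 1) => Y j.castSucc) k.succ_pos).deg + (b : ℕ)
        rw [hc, h2]
      | cast j =>
        simp only [pkT, splitLast, Equiv.trans_apply, Equiv.coe_fn_mk, Fin.lastCases_castSucc,
          Equiv.sumCongr_apply, Sum.map_inl]
        show ((pkT (fun j : Fin (k + 1) => X j.castSucc) k.succ_pos ⟨j, a⟩ : Fin _) : ℕ)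
            = ((pkT (fun j : Fin (k + 1) => Y j.castSucc) k.succ_pos ⟨j, b⟩ : Fin _) : ℕ)
        exact pkT_val_eq (fun j : Fin (k + 1) => X j.castSucc)
          (fun j : Fin (k + 1) => Y j.castSucc) k.succ_pos (fun j => hd j.castSucc)
          ⟨j, a⟩ ⟨j, b⟩ rfl h2

lemma mul_blockDiagonal'_apply {n : ℕ} {dd : Fin n → ℕ} {α : Type*}
    (X : Matrix α (Σ j, Fin (dd j)) ℂ)
    (Mf : (j : Fin n) → Matrix (Fin (dd j)) (Fin (dd j)) ℂ) (r : α) (j : Fin n)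
    (b : Fin (dd j)) :
    (X * Matrix.blockDiagonal' Mf) r ⟨j, b⟩ = ∑ b', X r ⟨j, b'⟩ * Mf j b' b := by
  rw [Matrix.mul_apply, ← Finset.univ_sigma_univ, Finset.sum_sigma]
  rw [Finset.sum_eq_single j]
  · apply Finset.sum_congr rfl
    intro b' _
    rw [Matrix.blockDiagonal'_apply_eq]
  · intro j' _ hj'
    apply Finset.sum_eq_zero
    intro b' _
    rw [Matrix.blockDiagonal'_apply_ne _ _ _ hj', mul_zero]
  · intro hj
    exact absurd (Finset.mem_univ j) hj

lemma blockDiagonal'_mul_apply {n : ℕ} {dd : Fin n → ℕ} {α : Type*}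
    (X : Matrix (Σ j, Fin (dd j)) α ℂ)
    (Mf : (j : Fin n) → Matrix (Fin (dd j)) (Fin (dd j)) ℂ) (j : Fin n)
    (a : Fin (dd j)) (c : α) :
    (Matrix.blockDiagonal' Mf * X) ⟨j, a⟩ c = ∑ a', Mf j a a' * X ⟨j, a'⟩ c := by
  rw [Matrix.mul_apply, ← Finset.univ_sigma_univ, Finset.sum_sigma]
  rw [Finset.sum_eq_single j]
  · apply Finset.sum_congr rfl
    intro a' _
    rw [Matrix.blockDiagonal'_apply_eq]
  · intro j' _ hj'
    apply Finset.sum_eq_zero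
    intro a' _
    rw [Matrix.blockDiagonal'_apply_ne _ _ _ (Ne.symm hj'), zero_mul]
  · intro hj
    exact absurd (Finset.mem_univ j) hj

lemma submatrix_one_mul' {m n : Type*} [Fintype n] [DecidableEq n]
    (e : m → n) (M : Matrix n n ℂ) :
    (1 : Matrix n n ℂ).submatrix e id * M = M.submatrix e id := by
  ext i j
  simp [Matrix.mul_apply, Matrix.one_apply]

lemma mul_submatrix_one' {m n : Type*} [Fintype n] [DecidableEq n]
    (e : m → n) (M : Matrix n n ℂ) :
    M * (1 : Matrix n n ℂ).submatrix id e = M.submatrix id e := by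
  ext i j
  simp [Matrix.mul_apply, Matrix.one_apply]

end Stmt4Aux
namespace Stmt4Aux
open Matrix

variable {Λ : Type*}

lemma cancel_l {m : Type*} [Fintype m] [DecidableEq m] {P Q : Matrix m m ℂ}
    (h : P * Q = 1) (Z : Matrix m m ℂ) : P * (Q * Z) = Z := by
  rw [← Matrix.mul_assoc, h, Matrix.one_mul]

lemma diagonal_const {m : Type*} [Fintype m] [DecidableEq m] (c : ℂ) :
    Matrix.diagonal (fun _ : m => c) = c • (1 : Matrix m m ℂ) := by
  ext i j
  by_cases h : i = j
  · subst h; simp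
  · simp [Matrix.diagonal_apply_ne _ h, Matrix.one_apply_ne h]

/-- The Hermitian commutant of an irreducible tuple consists of real scalars. -/
lemma commutant_scalar (X : MatTup Λ) (hX : X.Irred)
    (H : Matrix (Fin X.deg) (Fin X.deg) ℂ) (hH : H.IsHermitian)
    (hcomm : ∀ l, H * X.mat l = X.mat l * H) :
    ∃ c : ℝ, H = ((c : ℂ)) • (1 : Matrix (Fin X.deg) (Fin X.deg) ℂ) := by
  classical
  set W : Matrix (Fin X.deg) (Fin X.deg) ℂ := (hH.eigenvectorUnitary : Matrix (Fin X.deg) (Fin X.deg) ℂ) with hWdef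
  have hWu : W ∈ Matrix.unitaryGroup (Fin X.deg) ℂ := hH.eigenvectorUnitary.2
  have e1 : star W * W = 1 := Matrix.mem_unitaryGroup_iff'.mp hWu
  have e2 : W * star W = 1 := Matrix.mem_unitaryGroup_iff.mp hWu
  set ev : Fin X.deg → ℝ := hH.eigenvalues with hevdef
  set D : Matrix (Fin X.deg) (Fin X.deg) ℂ :=
    Matrix.diagonal (RCLike.ofReal ∘ ev) with hDdef
  have hspec : H = W * D * star W := hH.spectral_theorem
  have i₀ : Fin X.deg := ⟨0, X.deg_pos⟩
  by_cases hconst : ∀ i, ev i = ev i₀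
  · refine ⟨ev i₀, ?_⟩
    have hdiag : D = ((ev i₀ : ℝ) : ℂ) • (1 : Matrix _ _ ℂ) := by
      rw [hDdef, show (RCLike.ofReal ∘ ev : Fin X.deg → ℂ) = fun _ => ((ev i₀ : ℝ) : ℂ) from
        funext fun i => by simp [hconst i], diagonal_const]
    rw [hspec, hdiag, Matrix.mul_smul, Matrix.mul_one, Matrix.smul_mul, e2]
  · exfalso
    push_neg at hconst
    obtain ⟨i₁, hi₁⟩ := hconst
    set Z : Λ → Matrix (Fin X.deg) (Fin X.deg) ℂ :=
      fun l => star W * (X.mat l * W) with hZdef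
    have hvan : ∀ l i j, ev i ≠ ev j → Z l i j = 0 := by
      intro l i j hij
      have h2 := hcomm l
      rw [hspec] at h2
      have t0 : star W * ((W * D * star W) * X.mat l) * W
          = star W * (X.mat l * (W * D * star W)) * W := by rw [h2]
      have t1 : star W * ((W * D * star W) * X.mat l) * W = D * Z l := by
        simp only [Matrix.mul_assoc]
        rw [cancel_l e1]
      have t2 : star W * (X.mat l * (W * D * star W)) * W = Z l * D := by
        simp only [Matrix.mul_assoc]
        rw [e1, Matrix.mul_one]
        show _ = (star W * (X.mat l * W)) * D
        simp only [Matrix.mul_assoc]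
      rw [t1, t2] at t0
      have t3 : (RCLike.ofReal ∘ ev) i * Z l i j = Z l i j * (RCLike.ofReal ∘ ev) j := by
        rw [← Matrix.diagonal_mul, ← Matrix.mul_diagonal, ← hDdef, t0]
      simp only [Function.comp_apply] at t3
      have t4 : ((RCLike.ofReal (ev i) : ℂ) - (RCLike.ofReal (ev j) : ℂ)) * Z l i j = 0 := by
        rw [sub_mul, t3, mul_comm, sub_self]
      rcases mul_eq_zero.mp t4 with h | h
      · exact absurd (RCLike.ofReal_inj.mp (sub_eq_zero.mp h)) hij
      · exact h
    set p : Fin X.deg → Prop := fun i => ev i = ev i₀ with hpdef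
    set a := Fintype.card {i // p i} with hadef
    set b := Fintype.card {i // ¬ p i} with hbdef
    have ha : 0 < a := Fintype.card_pos_iff.mpr ⟨⟨i₀, rfl⟩⟩
    have hb : 0 < b := Fintype.card_pos_iff.mpr ⟨⟨i₁, hi₁⟩⟩
    have hab : a + b = X.deg := by
      have hcc := Fintype.card_congr (Equiv.sumCompl p)
      rwa [Fintype.card_sum, Fintype.card_fin] at hcc
    let es1 : {i // p i} ≃ Fin a := Fintype.equivFinOfCardEq rfl
    let es2 : {i // ¬ p i} ≃ Fin b := Fintype.equivFinOfCardEq rfl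
    let g : Fin X.deg ≃ Fin (a + b) :=
      ((Equiv.sumCompl p).symm.trans (es1.sumCongr es2)).trans finSumFinEquiv
    let e : Fin X.deg ≃ Fin X.deg := (g.trans (finCongr hab)).symm
    set V : Matrix (Fin X.deg) (Fin X.deg) ℂ := (1 : Matrix _ _ ℂ).submatrix ⇑e id with hVdef
    have hVH : Vᴴ = (1 : Matrix (Fin X.deg) (Fin X.deg) ℂ).submatrix id ⇑e := by
      rw [hVdef, Matrix.conjTranspose_submatrix, Matrix.conjTranspose_one]
    have hVV : V * Vᴴ = 1 := by
      rw [hVH, hVdef, submatrix_one_mul' (⇑e) _, Matrix.submatrix_submatrix]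
      simp only [Function.comp_id, Function.id_comp]
      exact Matrix.submatrix_one_equiv e
    have hVmem : V ∈ Matrix.unitaryGroup (Fin X.deg) ℂ := by
      rw [Matrix.mem_unitaryGroup_iff, Matrix.star_eq_conjTranspose]
      exact hVV
    have hWstarmem : star W ∈ Matrix.unitaryGroup (Fin X.deg) ℂ := Unitary.star_mem hWu
    set U0 : Matrix (Fin X.deg) (Fin X.deg) ℂ := V * star W with hU0def
    have hU0mem : U0 ∈ Matrix.unitaryGroup (Fin X.deg) ℂ := Submonoid.mul_mem _ hVmem hWstarmem
    have hU0inv : U0⁻¹ = star U0 :=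
      Matrix.inv_eq_right_inv (Matrix.mem_unitaryGroup_iff.mp hU0mem)
    have hconj : ∀ l, U0 * X.mat l * U0⁻¹ = (Z l).submatrix ⇑e ⇑e := by
      intro l
      rw [hU0inv, hU0def, Matrix.star_mul, star_star]
      have hassoc : V * star W * X.mat l * (W * star V) = V * (Z l * star V) := by
        simp only [hZdef, Matrix.mul_assoc]
      rw [hassoc, Matrix.star_eq_conjTranspose, hVH, mul_submatrix_one', hVdef,
        submatrix_one_mul', Matrix.submatrix_submatrix]
      simp [Function.comp]
    have he : ∀ (x : Fin X.deg), e x = (Equiv.sumCompl p)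
        ((es1.sumCongr es2).symm (finSumFinEquiv.symm (Fin.cast hab.symm x))) := by
      intro x
      simp only [e, g, Equiv.symm_trans_apply, finCongr_symm, finCongr_apply, Equiv.symm_symm]
    refine hX ⟨⟨a, ha, fun l u v => Z l ↑(es1.symm u) ↑(es1.symm v)⟩,
               ⟨b, hb, fun l u v => Z l ↑(es2.symm u) ↑(es2.symm v)⟩, U0, hU0mem, ?_⟩
    apply matTup_ext (show (X.act U0).deg = a + b from hab.symm)
    intro l i j
    show (U0 * X.mat l * U0⁻¹) i j = _
    rw [hconj l]
    show (Z l).submatrix (⇑e) (⇑e) i j = Matrix.fromBlocks _ 0 0 _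
      (finSumFinEquiv.symm (Fin.cast hab.symm i)) (finSumFinEquiv.symm (Fin.cast hab.symm j))
    rw [show (Z l).submatrix (⇑e) (⇑e) i j = Z l (e i) (e j) from rfl, he i, he j]
    rcases hu : finSumFinEquiv.symm (Fin.cast hab.symm i) with u | u <;>
      rcases hv : finSumFinEquiv.symm (Fin.cast hab.symm j) with v | v <;>
      simp only [Equiv.sumCongr_symm, Equiv.sumCongr_apply, Sum.map_inl, Sum.map_inr,
        Equiv.sumCompl_apply_inl, Equiv.sumCompl_apply_inr,
        Matrix.fromBlocks_apply₁₁, Matrix.fromBlocks_apply₁₂,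
        Matrix.fromBlocks_apply₂₁, Matrix.fromBlocks_apply₂₂, Matrix.zero_apply]
    all_goals first
      | rfl
      | exact hvan l _ _ (fun hc => (es2.symm v).2
          (show ev ↑(es2.symm v) = ev i₀ by rw [← hc]; exact (es1.symm u).2))
      | exact hvan l _ _ (fun hc => (es2.symm u).2
          (show ev ↑(es2.symm u) = ev i₀ by rw [hc]; exact (es1.symm v).2))

end Stmt4Aux
namespace Stmt4Aux
open Matrix
open scoped ComplexOrder

variable {Λ : Type*}

/-- Schur-type lemma: a (rectangular) intertwiner between irreducible tuples that also
intertwines in the starred direction automatically intertwines the `A`-matrices. -/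
lemma schur (X Y : MatTup Λ) (hX : X.Irred) (hY : Y.Irred)
    (M : Matrix (Fin Y.deg) (Fin X.deg) ℂ)
    (h1 : ∀ l, M * X.mat l = Y.mat l * M)
    (h2 : ∀ l, X.mat l * Mᴴ = Mᴴ * Y.mat l)
    (AX : Matrix (Fin X.deg) (Fin X.deg) ℂ) (AY : Matrix (Fin Y.deg) (Fin Y.deg) ℂ)
    (hAXY : ∀ (hd : X.deg = Y.deg) (V : Matrix (Fin X.deg) (Fin X.deg) ℂ),
        V ∈ Matrix.unitaryGroup (Fin X.deg) ℂ →
        (∀ l, V * X.mat l = (Y.mat l).submatrix (Fin.cast hd) (Fin.cast hd) * V) →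
        V * AX = AY.submatrix (Fin.cast hd) (Fin.cast hd) * V) :
    M * AX = AY * M := by
  by_cases hM0 : M = 0
  · subst hM0; simp
  have hHherm : (Mᴴ * M).IsHermitian := by
    have := Matrix.isHermitian_mul_conjTranspose_self Mᴴ
    rwa [Matrix.conjTranspose_conjTranspose] at this
  have hH'herm : (M * Mᴴ).IsHermitian := Matrix.isHermitian_mul_conjTranspose_self M
  have hHcomm : ∀ l, (Mᴴ * M) * X.mat l = X.mat l * (Mᴴ * M) := by
    intro l
    calc Mᴴ * M * X.mat l = Mᴴ * (Y.mat l * M) := by rw [Matrix.mul_assoc, h1]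
      _ = Mᴴ * Y.mat l * M := by rw [Matrix.mul_assoc]
      _ = X.mat l * Mᴴ * M := by rw [h2]
      _ = X.mat l * (Mᴴ * M) := by rw [Matrix.mul_assoc]
  have hH'comm : ∀ l, (M * Mᴴ) * Y.mat l = Y.mat l * (M * Mᴴ) := by
    intro l
    calc M * Mᴴ * Y.mat l = M * (Mᴴ * Y.mat l) := by rw [Matrix.mul_assoc]
      _ = M * (X.mat l * Mᴴ) := by rw [h2]
      _ = M * X.mat l * Mᴴ := by rw [Matrix.mul_assoc]
      _ = Y.mat l * M * Mᴴ := by rw [h1]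
      _ = Y.mat l * (M * Mᴴ) := by rw [Matrix.mul_assoc]
  obtain ⟨c, hc⟩ := commutant_scalar X hX _ hHherm hHcomm
  obtain ⟨c', hc'⟩ := commutant_scalar Y hY _ hH'herm hH'comm
  -- c is a positive real
  have hcne : c ≠ 0 := by
    intro h0
    apply hM0
    apply Matrix.conjTranspose_mul_self_eq_zero.mp
    rw [hc, h0]
    simp
  have j₀ : Fin X.deg := ⟨0, X.deg_pos⟩
  have hcval : (c : ℂ) = ((∑ i, Complex.normSq (M i j₀) : ℝ) : ℂ) := by
    have hd : (Mᴴ * M) j₀ j₀ = (c : ℂ) := by rw [hc]; simp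
    rw [← hd, Matrix.mul_apply]
    push_cast
    apply Finset.sum_congr rfl
    intro i _
    rw [Matrix.conjTranspose_apply]
    exact (Complex.normSq_eq_conj_mul_self).symm
  have hcnonneg : 0 ≤ c := by
    have := Complex.ofReal_inj.mp hcval
    rw [this]
    exact Finset.sum_nonneg fun i _ => Complex.normSq_nonneg _
  have hcpos : 0 < c := lt_of_le_of_ne hcnonneg (Ne.symm hcne)
  -- trace identity and positivity of c'
  have htr : (Mᴴ * M).trace = (M * Mᴴ).trace := Matrix.trace_mul_comm _ _
  rw [hc, hc', Matrix.trace_smul, Matrix.trace_smul, Matrix.trace_one, Matrix.trace_one,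
    smul_eq_mul, smul_eq_mul] at htr
  have htrR : c * (Fintype.card (Fin X.deg) : ℝ) = c' * (Fintype.card (Fin Y.deg) : ℝ) := by
    exact_mod_cast htr
  have hdx : (0 : ℝ) < (Fintype.card (Fin X.deg) : ℝ) := by
    simp only [Fintype.card_fin]
    exact_mod_cast X.deg_pos
  have hdy : (0 : ℝ) < (Fintype.card (Fin Y.deg) : ℝ) := by
    simp only [Fintype.card_fin]
    exact_mod_cast Y.deg_pos
  have hc'pos : 0 < c' := by nlinarith
  have hc'ne : c' ≠ 0 := hc'pos.ne'
  -- degrees agree, via ranks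
  have hXY : X.deg = Y.deg := by
    have runit : ∀ (n : ℕ) (d : ℝ), d ≠ 0 →
        IsUnit (((d : ℂ)) • (1 : Matrix (Fin n) (Fin n) ℂ)) := by
      intro n d hdne
      refine isUnit_iff_exists.mpr ⟨((d : ℂ)⁻¹) • (1 : Matrix (Fin n) (Fin n) ℂ), ?_, ?_⟩
      · rw [Matrix.smul_mul, Matrix.one_mul, smul_smul, mul_inv_cancel₀
          (Complex.ofReal_ne_zero.mpr hdne), one_smul]
      · rw [Matrix.smul_mul, Matrix.one_mul, smul_smul, inv_mul_cancel₀
          (Complex.ofReal_ne_zero.mpr hdne), one_smul]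
    have r1 : (Mᴴ * M).rank = M.rank := Matrix.rank_conjTranspose_mul_self M
    have r2 : (M * Mᴴ).rank = M.rank := Matrix.rank_self_mul_conjTranspose M
    have ru1 : (Mᴴ * M).rank = X.deg := by
      rw [hc, Matrix.rank_of_isUnit _ (runit _ _ hcne), Fintype.card_fin]
    have ru2 : (M * Mᴴ).rank = Y.deg := by
      rw [hc', Matrix.rank_of_isUnit _ (runit _ _ hc'ne), Fintype.card_fin]
    have le1 : X.deg ≤ Y.deg := by
      rw [← ru1, r1]
      have := Matrix.rank_le_card_height M
      simpa [Fintype.card_fin] using this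
    have le2 : Y.deg ≤ X.deg := by
      rw [← ru2, r2]
      have := Matrix.rank_le_card_width M
      simpa [Fintype.card_fin] using this
    exact le_antisymm le1 le2
  -- the unitary intertwiner
  set s : ℝ := Real.sqrt c with hsdef
  have hs : 0 < s := Real.sqrt_pos.mpr hcpos
  have hss : s * s = c := Real.mul_self_sqrt hcpos.le
  set Msub : Matrix (Fin X.deg) (Fin X.deg) ℂ := M.submatrix (Fin.cast hXY) id with hMsubdef
  set V : Matrix (Fin X.deg) (Fin X.deg) ℂ := ((s⁻¹ : ℝ) : ℂ) • Msub with hVdef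
  have hMM : Msubᴴ * Msub = ((c : ℝ) : ℂ) • (1 : Matrix (Fin X.deg) (Fin X.deg) ℂ) := by
    rw [hMsubdef, Matrix.conjTranspose_submatrix]
    have : Mᴴ.submatrix id (Fin.cast hXY) * M.submatrix (Fin.cast hXY) id
        = (Mᴴ * M).submatrix id id := by
      exact Matrix.submatrix_mul_equiv Mᴴ M id (finCongr hXY) id
    rw [this, Matrix.submatrix_id_id, hc]
  have hVunit : star V * V = 1 := by
    rw [hVdef, Matrix.star_eq_conjTranspose, Matrix.conjTranspose_smul,
      Matrix.smul_mul, Matrix.mul_smul, hMM]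
    rw [smul_smul, smul_smul]
    have hstar : star ((s⁻¹ : ℝ) : ℂ) = ((s⁻¹ : ℝ) : ℂ) := by
      rw [Complex.star_def, Complex.conj_ofReal]
    rw [hstar]
    have hr : s⁻¹ * s⁻¹ * c = 1 := by
      field_simp [hs.ne']
      linarith [hss]
    have hkey : ((s⁻¹ : ℝ) : ℂ) * ((s⁻¹ : ℝ) : ℂ) * ((c : ℝ) : ℂ) = 1 := by
      exact_mod_cast hr
    rw [hkey, one_smul]
  have hVmem : V ∈ Matrix.unitaryGroup (Fin X.deg) ℂ := by
    rw [Matrix.mem_unitaryGroup_iff]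
    exact mul_eq_one_comm.mp hVunit
  have hMsubint : ∀ l, Msub * X.mat l
      = (Y.mat l).submatrix (Fin.cast hXY) (Fin.cast hXY) * Msub := by
    intro l
    ext u b
    have lhs : (Msub * X.mat l) u b = (M * X.mat l) (Fin.cast hXY u) b := by
      simp [hMsubdef, Matrix.mul_apply]
    have rhs : ((Y.mat l).submatrix (Fin.cast hXY) (Fin.cast hXY) * Msub) u b
        = (Y.mat l * M) (Fin.cast hXY u) b := by
      simp only [Matrix.mul_apply, Matrix.submatrix_apply, id_eq, hMsubdef]
      exact Equiv.sum_comp (finCongr hXY)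
        (fun i => Y.mat l (Fin.cast hXY u) i * M i b)
    rw [lhs, rhs, h1]
  have hVint : ∀ l, V * X.mat l
      = (Y.mat l).submatrix (Fin.cast hXY) (Fin.cast hXY) * V := by
    intro l
    rw [hVdef, Matrix.smul_mul, hMsubint l, Matrix.mul_smul]
  have hVA := hAXY hXY V hVmem hVint
  have hMsubA : Msub * AX = AY.submatrix (Fin.cast hXY) (Fin.cast hXY) * Msub := by
    have hα : ((s⁻¹ : ℝ) : ℂ) ≠ 0 := Complex.ofReal_ne_zero.mpr (inv_ne_zero hs.ne')
    apply smul_right_injective (Matrix (Fin X.deg) (Fin X.deg) ℂ) hα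
    show ((s⁻¹ : ℝ) : ℂ) • (Msub * AX) = ((s⁻¹ : ℝ) : ℂ) • (_ * Msub)
    rw [← Matrix.smul_mul, ← hVdef, hVA, ← Matrix.mul_smul, ← hVdef]
  -- conclude
  ext i b
  have hi : Fin.cast hXY (Fin.cast hXY.symm i) = i := rfl
  have lhs : (M * AX) i b = (Msub * AX) (Fin.cast hXY.symm i) b := by
    simp [hMsubdef, Matrix.mul_apply, hi]
  have rhs : (AY * M) i b
      = (AY.submatrix (Fin.cast hXY) (Fin.cast hXY) * Msub) (Fin.cast hXY.symm i) b := by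
    simp only [Matrix.mul_apply, Matrix.submatrix_apply, id_eq, hMsubdef, hi]
    exact (Equiv.sum_comp (finCongr hXY) (fun i' => AY i i' * M i' b)).symm
  rw [lhs, rhs, hMsubA]

end Stmt4Aux
open Stmt4Aux Matrix

/-- key lemma. Let `T 0, …, T (n-1)` be irreducible tuples, `τ` a
permutation, and `A j` single matrices with `d(A j) = d(T j)` (ax1) such that whenever
`V.(T j) = T k` for a unitary `V`, then `V (A j) V⁻¹ = A k` (ax2, phrased via constant
tuples). Then any unitary `U` with `U.(T 0 ⊕ ⋯ ⊕ T (n-1)) = T (τ 0) ⊕ ⋯ ⊕ T (τ (n-1))`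
also satisfies `U (A 0 ⊕ ⋯ ⊕ A (n-1)) U⁻¹ = A (τ 0) ⊕ ⋯ ⊕ A (τ (n-1))` (again phrased via
constant tuples, transporting `U` along the trivial degree identity `h`). -/
theorem stmt_4 {Λ : Type*} [Nonempty Λ] {n : ℕ} (hn : 0 < n) (T : Fin n → MatTup Λ)
    (hT : ∀ j, (T j).Irred) (τ : Equiv.Perm (Fin n))
    (A : (j : Fin n) → Matrix (Fin (T j).deg) (Fin (T j).deg) ℂ)
    (hA : ∀ (j k : Fin n) (V : Matrix (Fin (T j).deg) (Fin (T j).deg) ℂ),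
      V ∈ Matrix.unitaryGroup (Fin (T j).deg) ℂ → (T j).act V = T k →
      (constTup (Λ := Λ) (T j).deg_pos (A j)).act V = constTup (T k).deg_pos (A k))
    (U : Matrix (Fin (MatTup.bigDsum T hn).deg) (Fin (MatTup.bigDsum T hn).deg) ℂ)
    (hU : U ∈ Matrix.unitaryGroup (Fin (MatTup.bigDsum T hn).deg) ℂ)
    (hUT : (MatTup.bigDsum T hn).act U = MatTup.bigDsum (fun j => T (τ j)) hn)
    (h : (MatTup.bigDsum (fun j => constTup (Λ := Λ) (T j).deg_pos (A j)) hn).deg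
        = (MatTup.bigDsum T hn).deg) :
    (MatTup.bigDsum (fun j => constTup (Λ := Λ) (T j).deg_pos (A j)) hn).act
        (Matrix.reindex (finCongr h.symm) (finCongr h.symm) U)
      = MatTup.bigDsum (fun j => constTup (Λ := Λ) (T (τ j)).deg_pos (A (τ j))) hn := by
  classical
  set Afam : Fin n → MatTup Λ := fun j => constTup (Λ := Λ) (T j).deg_pos (A j) with hAfam
  set Aτfam : Fin n → MatTup Λ := fun j => constTup (Λ := Λ) (T (τ j)).deg_pos (A (τ j))
    with hAτfam
  set Tτ : Fin n → MatTup Λ := fun j => T (τ j) with hTτ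
  -- basic unitarity facts for U
  have hU1 : U * Uᴴ = 1 := by
    have := Matrix.mem_unitaryGroup_iff.mp hU
    rwa [Matrix.star_eq_conjTranspose] at this
  have hU2 : Uᴴ * U = 1 := by
    have := Matrix.mem_unitaryGroup_iff'.mp hU
    rwa [Matrix.star_eq_conjTranspose] at this
  have hUinv : U⁻¹ = Uᴴ := Matrix.inv_eq_right_inv hU1
  -- degree bookkeeping
  have hdeg : (MatTup.bigDsum T hn).deg = (MatTup.bigDsum Tτ hn).deg := by
    have := congrArg MatTup.deg hUT
    exact this
  -- packing equivalences
  set eT := pkT T hn with heT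
  set eTτ := pkT Tτ hn with heTτ
  set g : ((j : Fin n) × Fin ((Tτ j).deg)) ≃ Fin ((MatTup.bigDsum T hn).deg) :=
    eTτ.trans (finCongr hdeg.symm) with hg
  -- the intertwining relation at the level of big matrices
  have hUmul : ∀ l, U * (MatTup.bigDsum T hn).mat l
      = ((MatTup.bigDsum Tτ hn).mat l).submatrix (Fin.cast hdeg) (Fin.cast hdeg) * U := by
    intro l
    have h3 : U * (MatTup.bigDsum T hn).mat l * U⁻¹
        = ((MatTup.bigDsum Tτ hn).mat l).submatrix (Fin.cast hdeg) (Fin.cast hdeg) := by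
      ext i j
      exact matTup_mat_congr hUT l i j
    rw [hUinv] at h3
    have h4 : U * (MatTup.bigDsum T hn).mat l
        = U * (MatTup.bigDsum T hn).mat l * Uᴴ * U := by
      rw [Matrix.mul_assoc (U * (MatTup.bigDsum T hn).mat l), hU2, Matrix.mul_one]
    rw [h4, h3]
  -- transported unitary
  set Usig : Matrix ((j : Fin n) × Fin ((Tτ j).deg)) ((j : Fin n) × Fin ((T j).deg)) ℂ :=
    U.submatrix ⇑g ⇑eT with hUsig
  have hgcast : ∀ p, Fin.cast hdeg (g p) = eTτ p := fun p => Fin.val_injective rfl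
  have hI1 : ∀ l, Usig * Matrix.blockDiagonal' (fun j => (T j).mat l)
      = Matrix.blockDiagonal' (fun j => (Tτ j).mat l) * Usig := by
    intro l
    have hBT : Matrix.blockDiagonal' (fun j => (T j).mat l)
        = ((MatTup.bigDsum T hn).mat l).submatrix ⇑eT ⇑eT := by
      ext p q
      rw [Matrix.submatrix_apply]
      exact (bigDsum_entry T hn l p q).symm
    have hBTτ : Matrix.blockDiagonal' (fun j => (Tτ j).mat l)
        = (((MatTup.bigDsum Tτ hn).mat l).submatrix (Fin.cast hdeg) (Fin.cast hdeg)).submatrix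
            ⇑g ⇑g := by
      ext p q
      rw [Matrix.submatrix_apply, Matrix.submatrix_apply, hgcast p, hgcast q]
      exact (bigDsum_entry Tτ hn l p q).symm
    rw [hBT, hBTτ, hUsig]
    calc U.submatrix ⇑g ⇑eT * ((MatTup.bigDsum T hn).mat l).submatrix ⇑eT ⇑eT
        = (U * (MatTup.bigDsum T hn).mat l).submatrix ⇑g ⇑eT :=
          Matrix.submatrix_mul_equiv U _ ⇑g eT ⇑eT
      _ = (((MatTup.bigDsum Tτ hn).mat l).submatrix (Fin.cast hdeg) (Fin.cast hdeg)
            * U).submatrix ⇑g ⇑eT := by rw [hUmul l]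
      _ = _ := (Matrix.submatrix_mul_equiv _ U ⇑g g ⇑eT).symm
  have hUsig1 : Usig * Usigᴴ = 1 := by
    rw [hUsig, Matrix.conjTranspose_submatrix,
      Matrix.submatrix_mul_equiv U Uᴴ ⇑g eT ⇑g, hU1, Matrix.submatrix_one_equiv]
  have hUsig2 : Usigᴴ * Usig = 1 := by
    rw [hUsig, Matrix.conjTranspose_submatrix,
      Matrix.submatrix_mul_equiv Uᴴ U ⇑eT g ⇑eT, hU2, Matrix.submatrix_one_equiv]
  have hI2 : ∀ l, Matrix.blockDiagonal' (fun j => (T j).mat l) * Usigᴴ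
      = Usigᴴ * Matrix.blockDiagonal' (fun j => (Tτ j).mat l) := by
    intro l
    calc Matrix.blockDiagonal' (fun j => (T j).mat l) * Usigᴴ
        = Usigᴴ * Usig * Matrix.blockDiagonal' (fun j => (T j).mat l) * Usigᴴ := by
          rw [hUsig2, Matrix.one_mul]
      _ = Usigᴴ * (Usig * Matrix.blockDiagonal' (fun j => (T j).mat l)) * Usigᴴ := by
          rw [Matrix.mul_assoc Usigᴴ]
      _ = Usigᴴ * (Matrix.blockDiagonal' (fun j => (Tτ j).mat l) * Usig) * Usigᴴ := by
          rw [hI1 l]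
      _ = Usigᴴ * Matrix.blockDiagonal' (fun j => (Tτ j).mat l) * (Usig * Usigᴴ) := by
          rw [← Matrix.mul_assoc, ← Matrix.mul_assoc, Matrix.mul_assoc _ Usig]
      _ = _ := by rw [hUsig1, Matrix.mul_one]
  -- the blocks of Usig
  set Mk : (k j : Fin n) → Matrix (Fin ((Tτ k).deg)) (Fin ((T j).deg)) ℂ :=
    fun k j => Matrix.of fun a b => Usig ⟨k, a⟩ ⟨j, b⟩ with hMk
  have hR1 : ∀ (k j : Fin n) (l : Λ), Mk k j * (T j).mat l = (Tτ k).mat l * Mk k j := by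
    intro k j l
    ext a b
    have hh := congrFun (congrFun (hI1 l) ⟨k, a⟩) ⟨j, b⟩
    rw [mul_blockDiagonal'_apply, blockDiagonal'_mul_apply] at hh
    rw [Matrix.mul_apply, Matrix.mul_apply]
    exact hh
  have hR2 : ∀ (k j : Fin n) (l : Λ), (T j).mat l * (Mk k j)ᴴ = (Mk k j)ᴴ * (Tτ k).mat l := by
    intro k j l
    ext b a
    have hh := congrFun (congrFun (hI2 l) ⟨j, b⟩) ⟨k, a⟩
    rw [blockDiagonal'_mul_apply, mul_blockDiagonal'_apply] at hh
    rw [Matrix.mul_apply, Matrix.mul_apply]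
    exact hh
  -- Schur: the blocks intertwine the A-matrices
  have hstar : ∀ k j : Fin n, Mk k j * A j = A (τ k) * Mk k j := by
    intro k j
    refine schur (T j) (Tτ k) (hT j) (hT (τ k)) (Mk k j) (hR1 k j) (hR2 k j) (A j) (A (τ k))
      ?_
    intro hd V hVmem hVint
    have hVstar : V * star V = 1 := Matrix.mem_unitaryGroup_iff.mp hVmem
    have hVinv : V⁻¹ = star V := Matrix.inv_eq_right_inv hVstar
    have hact : (T j).act V = Tτ k := by
      apply matTup_ext (show ((T j).act V).deg = (Tτ k).deg from hd)
      intro l a b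
      show (V * (T j).mat l * V⁻¹) a b = (Tτ k).mat l (Fin.cast hd a) (Fin.cast hd b)
      have hconj : V * (T j).mat l * V⁻¹
          = ((Tτ k).mat l).submatrix (Fin.cast hd) (Fin.cast hd) := by
        rw [hVinv]
        calc V * (T j).mat l * star V
            = ((Tτ k).mat l).submatrix (Fin.cast hd) (Fin.cast hd) * V * star V := by
              rw [hVint l]
          _ = ((Tτ k).mat l).submatrix (Fin.cast hd) (Fin.cast hd) * (V * star V) :=
              Matrix.mul_assoc _ _ _
          _ = _ := by rw [hVstar, Matrix.mul_one]
      rw [hconj]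
      rfl
    have hconstact := hA j (τ k) V hVmem hact
    have h7 : V * A j * V⁻¹ = (A (τ k)).submatrix (Fin.cast hd) (Fin.cast hd) := by
      ext a b
      exact matTup_mat_congr hconstact (Classical.arbitrary Λ) a b
    rw [hVinv] at h7
    calc V * A j = V * A j * star V * V := by
          rw [Matrix.mul_assoc (V * A j), mul_eq_one_comm.mp hVstar, Matrix.mul_one]
      _ = (A (τ k)).submatrix (Fin.cast hd) (Fin.cast hd) * V := by rw [h7]
  -- the core identity at the sigma level
  have hcore : Usig * Matrix.blockDiagonal' (fun j => A j)
      = Matrix.blockDiagonal' (fun k => A (τ k)) * Usig := by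
    ext p q
    obtain ⟨k, a⟩ := p
    obtain ⟨j, b⟩ := q
    rw [mul_blockDiagonal'_apply, blockDiagonal'_mul_apply]
    have hh := congrFun (congrFun (hstar k j) a) b
    rw [Matrix.mul_apply, Matrix.mul_apply] at hh
    exact hh
  -- repackage to the flat level
  have hANτ : (MatTup.bigDsum Tτ hn).deg = (MatTup.bigDsum Aτfam hn).deg :=
    bigDsum_deg_congr Tτ Aτfam hn (fun j => rfl)
  have hAll : (MatTup.bigDsum T hn).deg = (MatTup.bigDsum Aτfam hn).deg := hdeg.trans hANτ
  have hfin : (MatTup.bigDsum Afam hn).deg = (MatTup.bigDsum Aτfam hn).deg := h.trans hAll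
  have hcastT : ∀ p : (j : Fin n) × Fin ((T j).deg),
      Fin.cast h.symm (eT p) = pkT Afam hn p := fun p =>
    Fin.val_injective (pkT_val_eq T Afam hn (fun j => rfl) p p rfl rfl)
  have hcastTτ : ∀ p : (j : Fin n) × Fin ((Tτ j).deg),
      Fin.cast hAll (g p) = pkT Aτfam hn p := fun p =>
    Fin.val_injective (pkT_val_eq Tτ Aτfam hn (fun j => rfl) p p rfl rfl)
  have hsubU : U = Usig.submatrix ⇑g.symm ⇑eT.symm := by
    ext r s
    rw [hUsig]
    simp [Matrix.submatrix_apply, Equiv.apply_symm_apply]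
  -- reindexed U and its unitarity
  have hU''eq : (Matrix.reindex (finCongr h.symm) (finCongr h.symm) U : Matrix _ _ ℂ)
      = U.submatrix ⇑(finCongr h) ⇑(finCongr h) := by
    rw [Matrix.reindex_apply, finCongr_symm]
  have hU''unit : (Matrix.reindex (finCongr h.symm) (finCongr h.symm) U : Matrix _ _ ℂ)
      * (Matrix.reindex (finCongr h.symm) (finCongr h.symm) U : Matrix _ _ ℂ)ᴴ = 1 := by
    rw [hU''eq, Matrix.conjTranspose_submatrix,
      Matrix.submatrix_mul_equiv U Uᴴ ⇑(finCongr h) (finCongr h) ⇑(finCongr h), hU1,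
      Matrix.submatrix_one_equiv]
  have hU''inv : (Matrix.reindex (finCongr h.symm) (finCongr h.symm) U : Matrix _ _ ℂ)⁻¹
      = (Matrix.reindex (finCongr h.symm) (finCongr h.symm) U : Matrix _ _ ℂ)ᴴ :=
    Matrix.inv_eq_right_inv hU''unit
  -- finish
  apply matTup_ext (show ((MatTup.bigDsum Afam hn).act
    (Matrix.reindex (finCongr h.symm) (finCongr h.symm) U)).deg
      = (MatTup.bigDsum Aτfam hn).deg from hfin)
  intro l i j
  set BA : Matrix (Fin (MatTup.bigDsum Afam hn).deg) (Fin (MatTup.bigDsum Afam hn).deg) ℂ :=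
    (MatTup.bigDsum Afam hn).mat l with hBAdef
  set BAτ : Matrix (Fin (MatTup.bigDsum Aτfam hn).deg) (Fin (MatTup.bigDsum Aτfam hn).deg) ℂ :=
    (MatTup.bigDsum Aτfam hn).mat l with hBAτdef
  set BAN : Matrix (Fin (MatTup.bigDsum T hn).deg) (Fin (MatTup.bigDsum T hn).deg) ℂ :=
    BA.submatrix (Fin.cast h.symm) (Fin.cast h.symm) with hBANdef
  set BAτN : Matrix (Fin (MatTup.bigDsum T hn).deg) (Fin (MatTup.bigDsum T hn).deg) ℂ :=
    BAτ.submatrix (Fin.cast hAll) (Fin.cast hAll) with hBAτNdef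
  have hBAblk : ∀ p q, BAN (eT p) (eT q) = Matrix.blockDiagonal' (fun j => A j) p q := by
    intro p q
    show BA (Fin.cast h.symm (eT p)) (Fin.cast h.symm (eT q)) = _
    rw [hcastT p, hcastT q]
    exact bigDsum_entry Afam hn l p q
  have hBAτblk : ∀ p q, BAτN (g p) (g q)
      = Matrix.blockDiagonal' (fun k => A (τ k)) p q := by
    intro p q
    show BAτ (Fin.cast hAll (g p)) (Fin.cast hAll (g q)) = _
    rw [hcastTτ p, hcastTτ q]
    exact bigDsum_entry Aτfam hn l p q
  have hBANsub : BAN = (Matrix.blockDiagonal' (fun j => A j)).submatrix ⇑eT.symm ⇑eT.symm := by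
    ext r s
    rw [Matrix.submatrix_apply, ← hBAblk (eT.symm r) (eT.symm s), Equiv.apply_symm_apply,
      Equiv.apply_symm_apply]
  have hBAτNsub : BAτN
      = (Matrix.blockDiagonal' (fun k => A (τ k))).submatrix ⇑g.symm ⇑g.symm := by
    ext r s
    rw [Matrix.submatrix_apply, ← hBAτblk (g.symm r) (g.symm s), Equiv.apply_symm_apply,
      Equiv.apply_symm_apply]
  have claimC : U * BAN = BAτN * U := by
    rw [hBANsub, hBAτNsub]
    calc U * (Matrix.blockDiagonal' (fun j => A j)).submatrix ⇑eT.symm ⇑eT.symm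
        = Usig.submatrix ⇑g.symm ⇑eT.symm
            * (Matrix.blockDiagonal' (fun j => A j)).submatrix ⇑eT.symm ⇑eT.symm := by
          rw [← hsubU]
      _ = (Usig * Matrix.blockDiagonal' (fun j => A j)).submatrix ⇑g.symm ⇑eT.symm :=
          Matrix.submatrix_mul_equiv Usig _ ⇑g.symm eT.symm ⇑eT.symm
      _ = (Matrix.blockDiagonal' (fun k => A (τ k)) * Usig).submatrix ⇑g.symm ⇑eT.symm := by
          rw [hcore]
      _ = (Matrix.blockDiagonal' (fun k => A (τ k))).submatrix ⇑g.symm ⇑g.symm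
            * Usig.submatrix ⇑g.symm ⇑eT.symm :=
          (Matrix.submatrix_mul_equiv _ Usig ⇑g.symm g.symm ⇑eT.symm).symm
      _ = _ := by rw [← hsubU]
  have hBA_sub : BA = BAN.submatrix ⇑(finCongr h) ⇑(finCongr h) := by
    ext r s
    rw [Matrix.submatrix_apply]
    show BA r s = BA (Fin.cast h.symm (finCongr h r)) (Fin.cast h.symm (finCongr h s))
    rw [show Fin.cast h.symm (finCongr h r) = r from Fin.val_injective rfl,
      show Fin.cast h.symm (finCongr h s) = s from Fin.val_injective rfl]
  have hmulfinal : (Matrix.reindex (finCongr h.symm) (finCongr h.symm) U : Matrix _ _ ℂ) * BA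
      = BAτN.submatrix ⇑(finCongr h) ⇑(finCongr h)
        * (Matrix.reindex (finCongr h.symm) (finCongr h.symm) U : Matrix _ _ ℂ) := by
    rw [hU''eq, hBA_sub,
      Matrix.submatrix_mul_equiv U BAN ⇑(finCongr h) (finCongr h) ⇑(finCongr h), claimC,
      ← Matrix.submatrix_mul_equiv BAτN U ⇑(finCongr h) (finCongr h) ⇑(finCongr h)]
  have hfinalmat : (Matrix.reindex (finCongr h.symm) (finCongr h.symm) U : Matrix _ _ ℂ) * BA
      * (Matrix.reindex (finCongr h.symm) (finCongr h.symm) U : Matrix _ _ ℂ)⁻¹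
      = BAτN.submatrix ⇑(finCongr h) ⇑(finCongr h) := by
    rw [hU''inv, hmulfinal, Matrix.mul_assoc, hU''unit, Matrix.mul_one]
  show ((Matrix.reindex (finCongr h.symm) (finCongr h.symm) U : Matrix _ _ ℂ) * BA
      * (Matrix.reindex (finCongr h.symm) (finCongr h.symm) U : Matrix _ _ ℂ)⁻¹) i j
      = BAτ (Fin.cast hfin i) (Fin.cast hfin j)
  rw [hfinalmat]
  show BAτ (Fin.cast hAll (finCongr h i)) (Fin.cast hAll (finCongr h j)) = _
  rw [show Fin.cast hAll (finCongr h i) = Fin.cast hfin i from Fin.val_injective rfl,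
    show Fin.cast hAll (finCongr h j) = Fin.cast hfin j from Fin.val_injective rfl]
end
end
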